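/- arXiv:2410.10008 — 5 statements merged into one kernel-verified Lean document; each statement's English description precedes it below -/
import Mathlib

section
/- Two elements of the wreath product C₂ ≀ Sₙ are conjugate if and only if their associated signed partitions of n are equal. Consequently, the conjugacy classes of C₂ ≀ Sₙ are in bijection with the signed partitions of n (pairs (λ⁺, λ⁻) of partitions with |λ⁺| + |λ⁻| = n). -/
open scoped Classical

/-- The wreath product `G ≀ S_α`: pairs of a function `α → G` and a permutation of `α`. -/
@[ext] structure Wr (G : Type*) (α : Type*) where
  a : α → G
  p : Equiv.Perm α

namespace Wr

variable {G α : Type*} [Group G]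

instance : Mul (Wr G α) := ⟨fun x y => ⟨fun i => x.a i * y.a (x.p⁻¹ i), x.p * y.p⟩⟩
instance : One (Wr G α) := ⟨⟨fun _ => 1, 1⟩⟩
instance : Inv (Wr G α) := ⟨fun x => ⟨fun i => (x.a (x.p i))⁻¹, x.p⁻¹⟩⟩

@[simp] lemma mul_a (x y : Wr G α) : (x * y).a = fun i => x.a i * y.a (x.p⁻¹ i) := rfl
@[simp] lemma mul_p (x y : Wr G α) : (x * y).p = x.p * y.p := rfl
@[simp] lemma one_a : (1 : Wr G α).a = fun _ => 1 := rfl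
@[simp] lemma one_p : (1 : Wr G α).p = 1 := rfl
@[simp] lemma inv_a (x : Wr G α) : (x⁻¹).a = fun i => (x.a (x.p i))⁻¹ := rfl
@[simp] lemma inv_p (x : Wr G α) : (x⁻¹).p = x.p⁻¹ := rfl

instance : Group (Wr G α) where
  mul_assoc x y z := by
    ext i
    · simp [mul_assoc, Equiv.Perm.mul_apply]
    · simp [mul_assoc]
  one_mul x := by
    ext i
    · simp
    · simp
  mul_one x := by
    ext i
    · simp
    · simp
  inv_mul_cancel x := by
    ext i
    · simp
    · simp

noncomputable instance [Fintype G] [Fintype α] : Fintype (Wr G α) :=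
  Fintype.ofEquiv ((α → G) × Equiv.Perm α)
    { toFun := fun x => ⟨x.1, x.2⟩
      invFun := fun w => (w.a, w.p)
      left_inv := fun _ => rfl
      right_inv := fun _ => rfl }

end Wr

/-- The product of the `C₂`-entries of `a` over the cycle of `σ` containing `i`. -/
noncomputable def cycleProd {n : ℕ} (a : Fin n → ℤˣ) (σ : Equiv.Perm (Fin n)) (i : Fin n) : ℤˣ :=
  ∏ j ∈ Finset.univ.filter (fun j => σ.SameCycle i j), a j

/-- The number of indices lying on a cycle of `w.p` of length `k` whose cycle product is `ε`
(this is `k` times the number of parts of the signed partition of `w` equal to `k` with sign `ε`). -/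
noncomputable def signedCount {n : ℕ} (w : Wr ℤˣ (Fin n)) (k : ℕ) (ε : ℤˣ) : ℕ :=
  (Finset.univ.filter (fun i =>
    (Finset.univ.filter (fun j => w.p.SameCycle i j)).card = k ∧ cycleProd w.a w.p i = ε)).card

/-- A signed partition of `n`: a pair of partitions of total size `n`. -/
def SignedPartition (n : ℕ) : Type :=
  {pq : (Σ c : ℕ, c.Partition) × (Σ d : ℕ, d.Partition) // pq.1.1 + pq.2.1 = n}


open Equiv Equiv.Perm Finset

@[simp] theorem Equiv.Perm.inv_apply_self {α : Type*} (f : Perm α) (x : α) : f⁻¹ (f x) = x :=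
  f.symm_apply_apply x

@[simp] theorem Equiv.Perm.apply_inv_self {α : Type*} (f : Perm α) (x : α) : f (f⁻¹ x) = x :=
  f.apply_symm_apply x

namespace WrAux

variable {n : ℕ}

/-- The cycle (as a finset) of `σ` through `i`. -/
noncomputable def cls (σ : Perm (Fin n)) (i : Fin n) : Finset (Fin n) :=
  Finset.univ.filter (fun j => σ.SameCycle i j)

lemma mem_cls {σ : Perm (Fin n)} {i j : Fin n} : j ∈ cls σ i ↔ σ.SameCycle i j := by
  simp [cls]

lemma self_mem_cls {σ : Perm (Fin n)} {i : Fin n} : i ∈ cls σ i :=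
  mem_cls.2 (SameCycle.refl σ i)

lemma cls_congr {σ : Perm (Fin n)} {i j : Fin n} (h : σ.SameCycle i j) :
    cls σ i = cls σ j := by
  ext t; simp only [mem_cls]
  exact ⟨fun ht => h.symm.trans ht, fun ht => h.trans ht⟩

lemma cls_card_pos (σ : Perm (Fin n)) (i : Fin n) : 0 < (cls σ i).card :=
  Finset.card_pos.2 ⟨i, self_mem_cls⟩

lemma pow_fix {σ : Perm (Fin n)} {b : Fin n} {d : ℕ} (h : (σ ^ d) b = b) (q : ℕ) :
    (σ ^ (d * q)) b = b := by
  induction q with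
  | zero => simp
  | succ q ih => rw [Nat.mul_succ, pow_add, Perm.mul_apply, h, ih]

/-- Key facts about the cycle through `b`: writing `k` for the cycle's cardinality,
`σ ^ k b = b`, every point of the cycle is `σ ^ m b` for a unique `m < k`. -/
lemma cycle_facts (σ : Perm (Fin n)) (b : Fin n) :
    ((σ ^ (cls σ b).card) b = b) ∧
    (∀ j ∈ cls σ b, ∃ m < (cls σ b).card, (σ ^ m) b = j) ∧
    (∀ m₁ < (cls σ b).card, ∀ m₂ < (cls σ b).card,
      (σ ^ m₁) b = (σ ^ m₂) b → m₁ = m₂) := by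
  have hex : ∃ m, 0 < m ∧ (σ ^ m) b = b :=
    ⟨orderOf σ, orderOf_pos σ, by rw [pow_orderOf_eq_one]; rfl⟩
  classical
  set d := Nat.find hex with hd
  obtain ⟨hdpos, hdfix⟩ : 0 < d ∧ (σ ^ d) b = b := Nat.find_spec hex
  -- injectivity on range d
  have hinj : ∀ m₁ < d, ∀ m₂ < d, (σ ^ m₁) b = (σ ^ m₂) b → m₁ = m₂ := by
    intro m₁ h₁ m₂ h₂ heq
    by_contra hne
    wlog hlt : m₁ < m₂ generalizing m₁ m₂
    · exact this m₂ h₂ m₁ h₁ heq.symm (Ne.symm hne) (by omega)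
    have : (σ ^ m₁) ((σ ^ (m₂ - m₁)) b) = (σ ^ m₁) b := by
      rw [← Perm.mul_apply, ← pow_add, Nat.add_sub_cancel' hlt.le, heq]
    have hfix : (σ ^ (m₂ - m₁)) b = b := (σ ^ m₁).injective this
    exact Nat.find_min hex (show m₂ - m₁ < d by omega) ⟨by omega, hfix⟩
  -- surjectivity onto cls
  have hsurj : ∀ j ∈ cls σ b, ∃ m < d, (σ ^ m) b = j := by
    intro j hj
    obtain ⟨m, _, hm⟩ := (mem_cls.1 hj).exists_pow_eq'
    refine ⟨m % d, Nat.mod_lt _ hdpos, ?_⟩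
    have : (σ ^ (m % d + d * (m / d))) b = (σ ^ (m % d)) b := by
      rw [pow_add, Perm.mul_apply, pow_fix hdfix]
    have h2 : m % d + d * (m / d) = m := by rw [add_comm]; exact Nat.div_add_mod m d
    rw [← hm]
    conv_rhs => rw [← h2]
    rw [this]
  -- membership
  have hmem : ∀ m, (σ ^ m) b ∈ cls σ b := fun m =>
    mem_cls.2 ⟨(m : ℤ), by rw [zpow_natCast]⟩
  -- d = card
  have hcard : (Finset.range d).card = (cls σ b).card :=
    Finset.card_bij (fun m _ => (σ ^ m) b) (fun m _ => hmem m)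
      (fun m₁ h₁ m₂ h₂ h => hinj _ (Finset.mem_range.1 h₁) _ (Finset.mem_range.1 h₂) h)
      (fun j hj => (hsurj j hj).imp (fun m ⟨hm, he⟩ => ⟨Finset.mem_range.2 hm, he⟩))
  rw [Finset.card_range] at hcard
  rw [← hcard]
  exact ⟨hdfix, hsurj, hinj⟩


variable {n : ℕ}

/-- Quotient of `Fin n` by the cycles of `σ`. -/
def Q (σ : Perm (Fin n)) : Type := Quotient (SameCycle.setoid σ)

noncomputable instance (σ : Perm (Fin n)) : Fintype (Q σ) := Quotient.fintype _

abbrev qmk (σ : Perm (Fin n)) (i : Fin n) : Q σ := Quotient.mk (SameCycle.setoid σ) i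

lemma qmk_eq_iff {σ : Perm (Fin n)} {i j : Fin n} : qmk σ i = qmk σ j ↔ σ.SameCycle i j :=
  ⟨fun h => Quotient.exact h, fun h => @Quotient.sound _ (SameCycle.setoid σ) i j h⟩

noncomputable abbrev qout {σ : Perm (Fin n)} (q : Q σ) : Fin n := Quotient.out q

lemma qmk_qout {σ : Perm (Fin n)} (q : Q σ) : qmk σ (qout q) = q := Quotient.out_eq q

/-- length of the cycle indexed by `q`. -/
noncomputable def len {σ : Perm (Fin n)} (q : Q σ) : ℕ :=
  Quotient.lift (fun i => (cls σ i).card)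
    (fun i j h => by show (cls σ i).card = (cls σ j).card; rw [cls_congr h]) q

/-- cycle product of the cycle indexed by `q`. -/
noncomputable def sgn {σ : Perm (Fin n)} (a : Fin n → ℤˣ) (q : Q σ) : ℤˣ :=
  Quotient.lift (cycleProd a σ) (fun i j h => by
    show ∏ t ∈ cls σ i, a t = ∏ t ∈ cls σ j, a t
    rw [cls_congr h]) q

lemma len_qmk {σ : Perm (Fin n)} (i : Fin n) : len (qmk σ i) = (cls σ i).card := rfl

lemma sgn_qmk {σ : Perm (Fin n)} (a : Fin n → ℤˣ) (i : Fin n) :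
    sgn a (qmk σ i) = cycleProd a σ i := rfl

lemma cycleProd_eq_prod_cls {σ : Perm (Fin n)} (a : Fin n → ℤˣ) (i : Fin n) :
    cycleProd a σ i = ∏ j ∈ cls σ i, a j := rfl

lemma len_pos {σ : Perm (Fin n)} (q : Q σ) : 0 < len q := by
  induction q using Quotient.ind
  exact cls_card_pos σ _

lemma fiber_eq {σ : Perm (Fin n)} (q : Q σ) :
    Finset.univ.filter (fun i => qmk σ i = q) = cls σ (qout q) := by
  ext i
  simp only [Finset.mem_filter, Finset.mem_univ, true_and, mem_cls]
  constructor
  · intro h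
    exact qmk_eq_iff.1 ((qmk_qout q).trans h.symm)
  · intro h
    exact (qmk_eq_iff.2 h.symm).trans (qmk_qout q)

lemma fiber_card {σ : Perm (Fin n)} (q : Q σ) :
    (Finset.univ.filter (fun i => qmk σ i = q)).card = len q := by
  rw [fiber_eq, ← len_qmk, qmk_qout]

lemma sum_len (σ : Perm (Fin n)) : ∑ q : Q σ, len q = n := by
  have := Finset.card_eq_sum_card_fiberwise
    (f := qmk σ) (s := Finset.univ) (t := Finset.univ) (fun i _ => Finset.mem_univ _)
  simp only [Finset.card_univ, Fintype.card_fin] at this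
  refine Eq.trans (Finset.sum_congr rfl (fun q _ => (fiber_card q).symm)) this.symm

lemma countsFormula (w : Wr ℤˣ (Fin n)) (k : ℕ) (ε : ℤˣ) :
    signedCount w k ε =
      k * (Finset.univ.filter (fun q : Q w.p => len q = k ∧ sgn w.a q = ε)).card := by
  classical
  have h1 : signedCount w k ε =
      (Finset.univ.filter (fun i : Fin n =>
        (cls w.p i).card = k ∧ cycleProd w.a w.p i = ε)).card := rfl
  rw [h1]
  rw [Finset.card_eq_sum_card_fiberwise (f := qmk w.p)
    (t := Finset.univ.filter (fun q : Q w.p => len q = k ∧ sgn w.a q = ε))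
    (fun i hi => by
      rw [Finset.mem_coe, Finset.mem_filter] at hi ⊢
      exact ⟨Finset.mem_univ _, by rw [len_qmk, hi.2.1], by rw [sgn_qmk, hi.2.2]⟩)]
  have hfib : ∀ q ∈ Finset.univ.filter (fun q : Q w.p => len q = k ∧ sgn w.a q = ε),
      ((Finset.univ.filter (fun i : Fin n =>
        (cls w.p i).card = k ∧ cycleProd w.a w.p i = ε)).filter
        (fun i => qmk w.p i = q)).card = k := by
    intro q hq
    rw [Finset.mem_filter] at hq
    have heq : ((Finset.univ.filter (fun i : Fin n =>
        (cls w.p i).card = k ∧ cycleProd w.a w.p i = ε)).filter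
        (fun i => qmk w.p i = q)) = Finset.univ.filter (fun i => qmk w.p i = q) := by
      ext i
      simp only [Finset.mem_filter, Finset.mem_univ, true_and]
      refine ⟨fun h => h.2, fun h => ⟨⟨?_, ?_⟩, h⟩⟩
      · rw [← len_qmk, h, hq.2.1]
      · rw [← sgn_qmk, h, hq.2.2]
    rw [heq, fiber_card, ← hq.2.1]
  rw [Finset.sum_congr rfl hfib, Finset.sum_const, smul_eq_mul, mul_comm]

lemma signedCount_eq (w : Wr ℤˣ (Fin n)) (k : ℕ) (ε : ℤˣ) :
    signedCount w k ε = (Finset.univ.filter (fun i : Fin n =>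
      (cls w.p i).card = k ∧ cycleProd w.a w.p i = ε)).card := rfl

lemma sameCycle_conj {ρ σ : Perm (Fin n)} {i j : Fin n} :
    (ρ * σ * ρ⁻¹).SameCycle (ρ i) (ρ j) ↔ σ.SameCycle i j := by
  constructor
  · rintro ⟨z, hz⟩
    refine ⟨z, ρ.injective ?_⟩
    rw [← hz, conj_zpow, Perm.mul_apply, Perm.mul_apply, Perm.inv_apply_self]
  · rintro ⟨z, hz⟩
    refine ⟨z, ?_⟩
    rw [conj_zpow, Perm.mul_apply, Perm.mul_apply, Perm.inv_apply_self, hz]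

lemma cls_conj (ρ σ : Perm (Fin n)) (i : Fin n) :
    cls (ρ * σ * ρ⁻¹) (ρ i) = (cls σ i).image ρ := by
  ext j
  simp only [mem_cls, Finset.mem_image]
  constructor
  · intro h
    refine ⟨ρ⁻¹ j, ?_, by simp⟩
    rw [← sameCycle_conj (ρ := ρ)]
    simpa using h
  · rintro ⟨t, ht, rfl⟩
    exact sameCycle_conj.2 ht

lemma cls_card_conj (ρ σ : Perm (Fin n)) (i : Fin n) :
    (cls (ρ * σ * ρ⁻¹) (ρ i)).card = (cls σ i).card := by
  rw [cls_conj, Finset.card_image_of_injective _ ρ.injective]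

lemma conj_p (c x : Wr ℤˣ (Fin n)) : (c * x * c⁻¹).p = c.p * x.p * c.p⁻¹ := rfl

lemma conj_a (c x : Wr ℤˣ (Fin n)) (i : Fin n) :
    (c * x * c⁻¹).a i = c.a i * x.a (c.p⁻¹ i) * (c.a ((c * x * c⁻¹).p⁻¹ i))⁻¹ := by
  simp [conj_p, mul_assoc, Equiv.Perm.mul_apply]

lemma cycleProd_conj (c x : Wr ℤˣ (Fin n)) (i : Fin n) :
    cycleProd (c * x * c⁻¹).a (c * x * c⁻¹).p (c.p i) = cycleProd x.a x.p i := by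
  set y := c * x * c⁻¹ with hy
  have hτ : y.p = c.p * x.p * c.p⁻¹ := conj_p c x
  rw [cycleProd_eq_prod_cls, cycleProd_eq_prod_cls]
  have hsplit : ∀ j ∈ cls y.p (c.p i),
      y.a j = c.a j * x.a (c.p⁻¹ j) * (c.a (y.p⁻¹ j))⁻¹ := fun j _ => conj_a c x j
  rw [Finset.prod_congr rfl hsplit, Finset.prod_mul_distrib, Finset.prod_mul_distrib]
  have h3 : ∏ j ∈ cls y.p (c.p i), (c.a (y.p⁻¹ j))⁻¹ =
      (∏ j ∈ cls y.p (c.p i), c.a j)⁻¹ := by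
    rw [← Finset.prod_inv_distrib]
    refine Finset.prod_nbij' (fun j => y.p⁻¹ j) (fun j => y.p j) ?_ ?_ ?_ ?_ ?_
    · intro j hj
      exact mem_cls.2 ((mem_cls.1 hj).trans ⟨-1, by simp⟩)
    · intro j hj
      exact mem_cls.2 ((mem_cls.1 hj).trans ⟨1, by simp⟩)
    · intro j _; simp
    · intro j _; simp
    · intro j _; rfl
  have h2 : ∏ j ∈ cls y.p (c.p i), x.a (c.p⁻¹ j) = ∏ t ∈ cls x.p i, x.a t := by
    rw [hτ, cls_conj, Finset.prod_image (fun t _ t' _ h => c.p.injective h)]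
    simp
  rw [h3, h2]
  exact mul_inv_eq_iff_eq_mul.mpr (mul_comm _ _)

lemma signedCount_conj (c x : Wr ℤˣ (Fin n)) (k : ℕ) (ε : ℤˣ) :
    signedCount (c * x * c⁻¹) k ε = signedCount x k ε := by
  rw [signedCount_eq, signedCount_eq]
  refine Finset.card_bij' (fun j _ => c.p⁻¹ j) (fun i _ => c.p i) ?_ ?_ ?_ ?_
  · intro j hj
    rw [Finset.mem_filter] at hj ⊢
    have hc := cls_card_conj c.p x.p (c.p⁻¹ j)
    have hcp := cycleProd_conj c x (c.p⁻¹ j)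
    simp only [Perm.apply_inv_self] at hc hcp
    exact ⟨Finset.mem_univ _, by rw [← hc, ← conj_p]; exact hj.2.1,
           by rw [← hcp]; exact hj.2.2⟩
  · intro i hi
    rw [Finset.mem_filter] at hi ⊢
    have hc := cls_card_conj c.p x.p i
    have hcp := cycleProd_conj c x i
    exact ⟨Finset.mem_univ _, by rw [conj_p]; rw [hc]; exact hi.2.1,
           by rw [hcp]; exact hi.2.2⟩
  · intro j _; simp
  · intro i _; simp

lemma prod_range_cycle (σ : Perm (Fin n)) (B : Fin n) (f : Fin n → ℤˣ) :
    ∏ t ∈ Finset.range (cls σ B).card, f ((σ ^ t) B) = ∏ j ∈ cls σ B, f j := by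
  refine Finset.prod_bij (fun m _ => (σ ^ m) B)
    (fun m _ => mem_cls.2 ⟨(m : ℤ), by rw [zpow_natCast]⟩)
    (fun m₁ h₁ m₂ h₂ h =>
      (cycle_facts σ B).2.2 _ (Finset.mem_range.1 h₁) _ (Finset.mem_range.1 h₂) h)
    (fun j hj => ?_) (fun m _ => rfl)
  obtain ⟨m, hm, he⟩ := (cycle_facts σ B).2.1 j hj
  exact ⟨m, Finset.mem_range.2 hm, he⟩

/-- Two elements with the same permutation part and the same cycle products are conjugate
(by a purely diagonal element). -/
lemma isConj_of_same_cycleProd (z y : Wr ℤˣ (Fin n)) (hp : z.p = y.p)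
    (hs : ∀ i, cycleProd z.a z.p i = cycleProd y.a y.p i) :
    ∃ c : Wr ℤˣ (Fin n), c * z * c⁻¹ = y := by
  classical
  set σ := y.p with hσ
  set g : Fin n → ℤˣ := fun j => y.a j * (z.a j)⁻¹ with hg
  have hb : ∀ i : Fin n, σ.SameCycle (qout (qmk σ i)) i :=
    fun i => qmk_eq_iff.1 (qmk_qout (qmk σ i))
  have hr : ∀ i : Fin n, ∃ m, (σ ^ m) (qout (qmk σ i)) = i := by
    intro i
    obtain ⟨m, _, hm⟩ := (cycle_facts σ (qout (qmk σ i))).2.1 i (mem_cls.2 (hb i))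
    exact ⟨m, hm⟩
  set r : Fin n → ℕ := fun i => Nat.find (hr i) with hrdef
  set d : Fin n → ℤˣ :=
    fun i => ∏ t ∈ Finset.range (r i), g ((σ ^ (t + 1)) (qout (qmk σ i))) with hddef
  have hprodcls : ∀ B : Fin n, ∏ j ∈ cls σ B, g j = 1 := by
    intro B
    have hzB := hs B
    rw [hp] at hzB
    calc ∏ j ∈ cls σ B, g j = cycleProd y.a σ B * (cycleProd z.a σ B)⁻¹ := by
          rw [cycleProd_eq_prod_cls, cycleProd_eq_prod_cls, ← Finset.prod_inv_distrib,
            ← Finset.prod_mul_distrib]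
      _ = 1 := by rw [hzB]; simp
  -- the recurrence
  have hrec : ∀ i, d i = g i * d (σ⁻¹ i) := by
    intro i
    have hq : qmk σ (σ⁻¹ i) = qmk σ i := qmk_eq_iff.2 ⟨1, by simp⟩
    have hbb : qout (qmk σ (σ⁻¹ i)) = qout (qmk σ i) := congrArg qout hq
    have h2 : (σ ^ r (σ⁻¹ i)) (qout (qmk σ i)) = σ⁻¹ i := by
      rw [← hbb]; exact Nat.find_spec (hr (σ⁻¹ i))
    have h1 : (σ ^ r i) (qout (qmk σ i)) = i := Nat.find_spec (hr i)
    have hd2 : d (σ⁻¹ i) = ∏ t ∈ Finset.range (r (σ⁻¹ i)),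
        g ((σ ^ (t + 1)) (qout (qmk σ i))) := by
      rw [hddef]
      show ∏ t ∈ Finset.range (r (σ⁻¹ i)), g ((σ ^ (t + 1)) (qout (qmk σ (σ⁻¹ i)))) = _
      rw [hbb]
    have hdi : d i = ∏ t ∈ Finset.range (r i),
        g ((σ ^ (t + 1)) (qout (qmk σ i))) := by rw [hddef]
    set B := qout (qmk σ i) with hB
    set k := (cls σ B).card with hk
    have hkfix : (σ ^ k) B = B := (cycle_facts σ B).1
    have huniq := (cycle_facts σ B).2.2
    have hkpos : 0 < k := cls_card_pos σ B
    rcases Nat.eq_zero_or_pos (r i) with hr0 | hrpos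
    · -- i = B, r (σ⁻¹ i) = k - 1
      have hiB : i = B := by rw [← h1, hr0, pow_zero]; simp
      have hwit : (σ ^ (k - 1)) B = σ⁻¹ i := by
        have h' : σ ((σ ^ (k - 1)) B) = B := by
          rw [← Perm.mul_apply, ← pow_succ', Nat.sub_add_cancel hkpos]
          exact hkfix
        rw [hiB]
        conv_rhs => rw [← h']
        rw [Perm.inv_apply_self]
      have hr2 : r (σ⁻¹ i) = k - 1 := by
        have hle : r (σ⁻¹ i) ≤ k - 1 :=
          Nat.find_min' (hr (σ⁻¹ i)) (by rw [hbb]; exact hwit)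
        rcases Nat.lt_or_ge (r (σ⁻¹ i)) (k - 1) with hlt | hge
        · exfalso
          have hstep : (σ ^ (r (σ⁻¹ i) + 1)) B = B := by
            rw [pow_succ', Perm.mul_apply, h2, Perm.apply_inv_self, hiB]
          have h0 : (σ ^ (0 : ℕ)) B = B := by simp
          have := huniq _ (show r (σ⁻¹ i) + 1 < (cls σ B).card by omega) 0
            (show 0 < (cls σ B).card by omega) (hstep.trans h0.symm)
          omega
        · omega
      have hsplit := Finset.prod_range_succ' (fun t => g ((σ ^ t) B)) (k - 1)
      rw [Nat.sub_add_cancel hkpos] at hsplit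
      have hone : (∏ t ∈ Finset.range (k - 1), g ((σ ^ (t + 1)) B)) * g B = 1 := by
        have h3 := hsplit.symm.trans ((prod_range_cycle σ B g).trans (hprodcls B))
        simpa using h3
      have hdi1 : d i = 1 := by rw [hdi, hr0]; simp
      rw [hdi1, hd2, hr2, hiB, mul_comm]
      exact hone.symm
    · -- r i = m + 1
      obtain ⟨m, hm⟩ : ∃ m, r i = m + 1 := ⟨r i - 1, by omega⟩
      have hσinv : σ⁻¹ i = (σ ^ m) B := by
        have h' : σ ((σ ^ m) B) = i := by
          rw [← Perm.mul_apply, ← pow_succ', ← hm, h1]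
        conv_lhs => rw [← h']
        rw [Perm.inv_apply_self]
      have hr2 : r (σ⁻¹ i) = m := by
        have hle : r (σ⁻¹ i) ≤ m :=
          Nat.find_min' (hr (σ⁻¹ i)) (by rw [hbb, ← hσinv])
        rcases Nat.lt_or_ge (r (σ⁻¹ i)) m with hlt | hge
        · exfalso
          have hstep : (σ ^ (r (σ⁻¹ i) + 1)) B = i := by
            rw [pow_succ', Perm.mul_apply, h2, Perm.apply_inv_self]
          exact Nat.find_min (hr i) (show r (σ⁻¹ i) + 1 < r i by omega) hstep
        · omega
      have hlast : (σ ^ (m + 1)) B = i := by rw [← hm, h1]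
      rw [hdi, hd2, hr2, hm, Finset.prod_range_succ, hlast, mul_comm]
  -- build the conjugator
  refine ⟨⟨d, 1⟩, ?_⟩
  have hcp : (Wr.mk d 1 : Wr ℤˣ (Fin n)).p = 1 := rfl
  have hzp : (Wr.mk d 1 * z * (Wr.mk d 1)⁻¹).p = z.p := by
    rw [conj_p]
    show 1 * z.p * 1⁻¹ = z.p
    group
  have ha : ∀ i, (Wr.mk d 1 * z * (Wr.mk d 1)⁻¹).a i = y.a i := by
    intro i
    rw [conj_a, hzp, hp]
    show d i * z.a ((1 : Perm (Fin n))⁻¹ i) * (d (σ⁻¹ i))⁻¹ = y.a i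
    rw [inv_one, Perm.one_apply]
    rw [hrec i]
    show y.a i * (z.a i)⁻¹ * d (σ⁻¹ i) * z.a i * (d (σ⁻¹ i))⁻¹ = y.a i
    rw [mul_right_comm (y.a i * (z.a i)⁻¹) (d (σ⁻¹ i)) (z.a i), inv_mul_cancel_right,
      mul_inv_cancel_right]
  have hpp : (Wr.mk d 1 * z * (Wr.mk d 1)⁻¹).p = y.p := hzp.trans hp
  exact Wr.ext (funext ha) hpp

lemma len_qout {σ : Perm (Fin n)} (q : Q σ) : (cls σ (qout q)).card = len q := by
  rw [← len_qmk, qmk_qout]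

lemma isConj_of_counts (x y : Wr ℤˣ (Fin n))
    (h : ∀ (k : ℕ) (ε : ℤˣ), signedCount x k ε = signedCount y k ε) : IsConj x y := by
  classical
  -- fiber cardinalities agree
  have hfib : ∀ v : ℕ × ℤˣ,
      Fintype.card {q : Q x.p // (len q, sgn x.a q) = v} =
      Fintype.card {q : Q y.p // (len q, sgn y.a q) = v} := by
    rintro ⟨k, ε⟩
    have hx : Fintype.card {q : Q x.p // (len q, sgn x.a q) = (k, ε)} =
        (Finset.univ.filter (fun q : Q x.p => len q = k ∧ sgn x.a q = ε)).card := by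
      rw [Fintype.card_subtype]
      congr 1
      apply Finset.filter_congr
      intro q _
      simp [Prod.ext_iff]
    have hy : Fintype.card {q : Q y.p // (len q, sgn y.a q) = (k, ε)} =
        (Finset.univ.filter (fun q : Q y.p => len q = k ∧ sgn y.a q = ε)).card := by
      rw [Fintype.card_subtype]
      congr 1
      apply Finset.filter_congr
      intro q _
      simp [Prod.ext_iff]
    rcases Nat.eq_zero_or_pos k with hk0 | hkpos
    · have hex : (Finset.univ.filter (fun q : Q x.p => len q = k ∧ sgn x.a q = ε)) = ∅ := by
        refine Finset.filter_false_of_mem (fun q _ => ?_)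
        rintro ⟨hl, -⟩
        exact absurd (hk0 ▸ hl ▸ len_pos q) (lt_irrefl 0)
      have hey : (Finset.univ.filter (fun q : Q y.p => len q = k ∧ sgn y.a q = ε)) = ∅ := by
        refine Finset.filter_false_of_mem (fun q _ => ?_)
        rintro ⟨hl, -⟩
        exact absurd (hk0 ▸ hl ▸ len_pos q) (lt_irrefl 0)
      rw [hx, hy, hex, hey]
      rfl
    · have hc := h k ε
      rw [countsFormula, countsFormula] at hc
      rw [hx, hy]
      exact Nat.eq_of_mul_eq_mul_left hkpos hc
  set vx : Q x.p → ℕ × ℤˣ := fun q => (len q, sgn x.a q) with hvx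
  set vy : Q y.p → ℕ × ℤˣ := fun q => (len q, sgn y.a q) with hvy
  have e : ∀ v : ℕ × ℤˣ, {q : Q x.p // vx q = v} ≃ {q : Q y.p // vy q = v} :=
    fun v => Classical.choice (Fintype.card_eq.mp (hfib v))
  set β : Q x.p ≃ Q y.p := Equiv.ofFiberEquiv e with hβdef
  have hβ : ∀ q, vy (β q) = vx q := fun q => Equiv.ofFiberEquiv_map e q
  have hlenβ : ∀ q, len (β q) = len q := fun q => congrArg Prod.fst (hβ q)
  have hsgnβ : ∀ q, sgn y.a (β q) = sgn x.a q := fun q => congrArg Prod.snd (hβ q)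
  -- the conjugating permutation
  have hre : ∀ i : Fin n, ∃ m, (x.p ^ m) (qout (qmk x.p i)) = i := by
    intro i
    have hb : x.p.SameCycle (qout (qmk x.p i)) i := qmk_eq_iff.1 (qmk_qout (qmk x.p i))
    obtain ⟨m, _, hm⟩ := (cycle_facts x.p (qout (qmk x.p i))).2.1 i (mem_cls.2 hb)
    exact ⟨m, hm⟩
  set r : Fin n → ℕ := fun i => Nat.find (hre i) with hrdef
  have hrspec : ∀ i, (x.p ^ r i) (qout (qmk x.p i)) = i := fun i => Nat.find_spec (hre i)
  have hrlt : ∀ i, r i < len (qmk x.p i) := by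
    intro i
    have hb : x.p.SameCycle (qout (qmk x.p i)) i := qmk_eq_iff.1 (qmk_qout (qmk x.p i))
    obtain ⟨m, hm, he⟩ := (cycle_facts x.p (qout (qmk x.p i))).2.1 i (mem_cls.2 hb)
    calc r i ≤ m := Nat.find_min' (hre i) he
      _ < (cls x.p (qout (qmk x.p i))).card := hm
      _ = len (qmk x.p i) := len_qout _
  set πf : Fin n → Fin n := fun i => (y.p ^ r i) (qout (β (qmk x.p i))) with hπf
  have hclassmk : ∀ i, qmk y.p (πf i) = β (qmk x.p i) := by
    intro i
    have : y.p.SameCycle (qout (β (qmk x.p i))) (πf i) := ⟨(r i : ℤ), by rw [zpow_natCast]⟩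
    exact (qmk_eq_iff.2 this).symm.trans (qmk_qout _)
  -- injectivity
  have hinj : Function.Injective πf := by
    intro i j hij
    have hq : qmk x.p i = qmk x.p j := by
      have := (hclassmk i).symm.trans ((congrArg (qmk y.p) hij).trans (hclassmk j))
      exact β.injective this
    have hcard : (cls y.p (qout (β (qmk x.p i)))).card = len (qmk x.p i) := by
      rw [len_qout, hlenβ]
    have huniq := (cycle_facts y.p (qout (β (qmk x.p i)))).2.2
    have h1 : r i < (cls y.p (qout (β (qmk x.p i)))).card := by
      rw [hcard]; exact hrlt i
    have h2 : r j < (cls y.p (qout (β (qmk x.p i)))).card := by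
      rw [hcard, hq]; exact hrlt j
    have heq : (y.p ^ r i) (qout (β (qmk x.p i))) = (y.p ^ r j) (qout (β (qmk x.p i))) := by
      have hj' : πf j = (y.p ^ r j) (qout (β (qmk x.p i))) := by rw [hπf]; rw [hq]
      rw [← hj', ← hij]
    have hrij : r i = r j := huniq _ h1 _ h2 heq
    calc i = (x.p ^ r i) (qout (qmk x.p i)) := (hrspec i).symm
      _ = (x.p ^ r j) (qout (qmk x.p j)) := by rw [hrij, hq]
      _ = j := hrspec j
  -- equivariance
  have hequiv : ∀ i, πf (x.p i) = y.p (πf i) := by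
    intro i
    have hq : qmk x.p (x.p i) = qmk x.p i := qmk_eq_iff.2 ⟨-1, by simp⟩
    have hB : qout (qmk x.p (x.p i)) = qout (qmk x.p i) := congrArg qout hq
    set B := qout (qmk x.p i) with hBdef
    set k := (cls x.p B).card with hkdef
    have hklen : k = len (qmk x.p i) := len_qout _
    have hkfix : (x.p ^ k) B = B := (cycle_facts x.p B).1
    have huniq := (cycle_facts x.p B).2.2
    have hkpos : 0 < k := cls_card_pos x.p B
    have hr1 : (x.p ^ r i) B = i := hrspec i
    have hr1lt : r i < k := by rw [hklen]; exact hrlt i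
    have hr2spec : (x.p ^ r (x.p i)) B = x.p i := by rw [← hB]; exact hrspec (x.p i)
    have hr2lt : r (x.p i) < k := by
      rw [hklen, ← hq]; exact hrlt (x.p i)
    have hstep : (x.p ^ (r i + 1)) B = x.p i := by
      rw [pow_succ', Perm.mul_apply, hr1]
    -- y-side data
    have hcardy : (cls y.p (qout (β (qmk x.p i)))).card = k := by
      rw [len_qout, hlenβ, hklen]
    have hkfixy : (y.p ^ k) (qout (β (qmk x.p i))) = qout (β (qmk x.p i)) := by
      rw [← hcardy]; exact (cycle_facts y.p _).1
    have hπxi : πf (x.p i) = (y.p ^ r (x.p i)) (qout (β (qmk x.p i))) := by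
      rw [hπf]
      show (y.p ^ r (x.p i)) (qout (β (qmk x.p (x.p i)))) = _
      rw [hq]
    rcases Nat.lt_or_ge (r i + 1) k with hlt | hge
    · -- r (x.p i) = r i + 1
      have hr2 : r (x.p i) = r i + 1 := by
        have hle : r (x.p i) ≤ r i + 1 := Nat.find_min' (hre (x.p i)) (by rw [hB]; exact hstep)
        rcases Nat.lt_or_ge (r (x.p i)) (r i + 1) with hlt2 | hge2
        · exfalso
          have := huniq _ (by omega) _ hlt (hr2spec.trans hstep.symm)
          omega
        · omega
      rw [hπxi, hr2, pow_succ', Perm.mul_apply, hπf]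
    · -- r i + 1 = k, wrap around
      have hik : r i + 1 = k := by omega
      have hxiB : x.p i = B := by rw [← hstep, hik, hkfix]
      have hr2 : r (x.p i) = 0 := by
        have hle : r (x.p i) ≤ 0 := Nat.find_min' (hre (x.p i)) (by rw [hB, pow_zero]; simp [hxiB])
        omega
      rw [hπxi, hr2, pow_zero]
      have : y.p (πf i) = (y.p ^ (r i + 1)) (qout (β (qmk x.p i))) := by
        rw [pow_succ', Perm.mul_apply, hπf]
      rw [this, hik, hkfixy]
      simp
  -- sign transport
  have hsgnt : ∀ i, cycleProd y.a y.p (πf i) = cycleProd x.a x.p i := by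
    intro i
    rw [← sgn_qmk y.a (πf i), hclassmk i, hsgnβ, sgn_qmk]
  -- assemble
  have hbij : Function.Bijective πf := Finite.injective_iff_bijective.1 hinj
  set π : Perm (Fin n) := Equiv.ofBijective πf hbij with hπ
  have hπapp : ∀ i, π i = πf i := fun i => rfl
  have hconjp : π * x.p * π⁻¹ = y.p := by
    apply Equiv.ext
    intro j
    show π (x.p (π⁻¹ j)) = y.p j
    rw [hπapp, hequiv (π⁻¹ j), ← hπapp, Equiv.Perm.apply_inv_self]
  set c₀ : Wr ℤˣ (Fin n) := ⟨fun _ => 1, π⟩ with hc₀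
  set z : Wr ℤˣ (Fin n) := c₀ * x * c₀⁻¹ with hz
  have hzp : z.p = y.p := by rw [hz, conj_p, hc₀]; exact hconjp
  have hzcp : ∀ i, cycleProd z.a z.p i = cycleProd y.a y.p i := by
    intro i
    have h1 := cycleProd_conj c₀ x (π⁻¹ i)
    have hc₀p : c₀.p = π := rfl
    rw [hc₀p, Equiv.Perm.apply_inv_self] at h1
    rw [← hz] at h1
    rw [h1]
    have h2 := hsgnt (π⁻¹ i)
    rw [← hπapp, Equiv.Perm.apply_inv_self] at h2
    exact h2.symm
  obtain ⟨c, hc⟩ := isConj_of_same_cycleProd z y hzp hzcp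
  rw [isConj_iff]
  refine ⟨c * c₀, ?_⟩
  have : c * c₀ * x * (c * c₀)⁻¹ = c * (c₀ * x * c₀⁻¹) * c⁻¹ := by group
  rw [this, ← hz, hc]

lemma counts_of_isConj (x y : Wr ℤˣ (Fin n)) (h : IsConj x y) :
    ∀ (k : ℕ) (ε : ℤˣ), signedCount x k ε = signedCount y k ε := by
  obtain ⟨c, hc⟩ := isConj_iff.1 h
  intro k ε
  rw [← hc, signedCount_conj]

/-- The multiset of cycle lengths of sign `ε`. -/
noncomputable def P (w : Wr ℤˣ (Fin n)) (ε : ℤˣ) : Multiset ℕ :=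
  (Finset.univ.filter (fun q : Q w.p => sgn w.a q = ε)).val.map len

lemma count_P (w : Wr ℤˣ (Fin n)) (ε : ℤˣ) (k : ℕ) :
    (P w ε).count k =
      (Finset.univ.filter (fun q : Q w.p => len q = k ∧ sgn w.a q = ε)).card := by
  classical
  rw [P, Multiset.count_map]
  show Multiset.card _ = (Finset.univ.filter (fun q : Q w.p
      => len q = k ∧ sgn w.a q = ε)).val.card
  rw [Finset.filter_val, Finset.filter_val, Multiset.filter_filter]
  congr 1
  apply Multiset.filter_congr
  intro q _
  constructor
  · rintro ⟨h1, h2⟩; exact ⟨h1.symm, h2⟩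
  · rintro ⟨h1, h2⟩; exact ⟨h1.symm, h2⟩

lemma zero_not_mem_P (w : Wr ℤˣ (Fin n)) (ε : ℤˣ) : 0 ∉ P w ε := by
  intro hmem
  rw [P, Multiset.mem_map] at hmem
  obtain ⟨q, _, hq⟩ := hmem
  exact absurd (hq ▸ len_pos q) (lt_irrefl 0)

lemma P_pos (w : Wr ℤˣ (Fin n)) (ε : ℤˣ) : ∀ i ∈ P w ε, 0 < i := by
  intro i hi
  rcases Nat.eq_zero_or_pos i with h | h
  · exact absurd (h ▸ hi) (zero_not_mem_P w ε)
  · exact h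

lemma sum_P (w : Wr ℤˣ (Fin n)) : (P w 1).sum + (P w (-1)).sum = n := by
  classical
  have h1 : ∀ ε, (P w ε).sum = ∑ q ∈ Finset.univ.filter (fun q : Q w.p => sgn w.a q = ε),
      len q := fun ε => rfl
  rw [h1, h1]
  have hneg : (Finset.univ.filter (fun q : Q w.p => sgn w.a q = -1)) =
      (Finset.univ.filter (fun q : Q w.p => ¬ sgn w.a q = 1)) := by
    apply Finset.filter_congr
    intro q _
    rcases Int.units_eq_one_or (sgn w.a q) with h | h <;> simp [h]
  rw [hneg, Finset.sum_filter_add_sum_filter_not]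
  exact sum_len w.p

/-- Constructor for signed partitions. -/
def mkSP (m₁ m₂ : Multiset ℕ) (h₁ : ∀ i ∈ m₁, 0 < i) (h₂ : ∀ i ∈ m₂, 0 < i)
    (hsum : m₁.sum + m₂.sum = n) : SignedPartition n :=
  ⟨(⟨m₁.sum, ⟨m₁, fun hi => h₁ _ hi, rfl⟩⟩, ⟨m₂.sum, ⟨m₂, fun hi => h₂ _ hi, rfl⟩⟩), hsum⟩

lemma mkSP_congr {m₁ m₂ m₁' m₂' : Multiset ℕ} (e₁ : m₁ = m₁') (e₂ : m₂ = m₂')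
    {h₁ h₂ hsum h₁' h₂' hsum'} :
    (mkSP (n := n) m₁ m₂ h₁ h₂ hsum) = mkSP m₁' m₂' h₁' h₂' hsum' := by
  subst e₁; subst e₂; rfl

lemma mkSP_inj {m₁ m₂ m₁' m₂' : Multiset ℕ} {h₁ h₂ hsum h₁' h₂' hsum'}
    (h : (mkSP (n := n) m₁ m₂ h₁ h₂ hsum) = mkSP m₁' m₂' h₁' h₂' hsum') :
    m₁ = m₁' ∧ m₂ = m₂' :=
  ⟨congrArg (fun sp : SignedPartition n => sp.val.1.2.parts) h,
   congrArg (fun sp : SignedPartition n => sp.val.2.2.parts) h⟩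

lemma sp_eq_mkSP (sp : SignedPartition n) :
    sp = mkSP sp.val.1.2.parts sp.val.2.2.parts
      (fun _ hi => sp.val.1.2.parts_pos hi)
      (fun _ hi => sp.val.2.2.parts_pos hi)
      (by rw [sp.val.1.2.parts_sum, sp.val.2.2.parts_sum]; exact sp.prop) := by
  obtain ⟨⟨⟨c, Pp⟩, ⟨dd, Qq⟩⟩, hsum⟩ := sp
  obtain ⟨pp, ppos, psum⟩ := Pp
  obtain ⟨qq, qpos, qsum⟩ := Qq
  subst psum
  subst qsum
  rfl

/-- The signed partition of a wreath product element. -/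
noncomputable def Phi (w : Wr ℤˣ (Fin n)) : SignedPartition n :=
  mkSP (P w 1) (P w (-1)) (P_pos w 1) (P_pos w (-1)) (sum_P w)

lemma signedCount_eq_P (w : Wr ℤˣ (Fin n)) (k : ℕ) (ε : ℤˣ) :
    signedCount w k ε = k * (P w ε).count k := by
  rw [countsFormula, count_P]

lemma Phi_eq_of_counts {x y : Wr ℤˣ (Fin n)}
    (h : ∀ (k : ℕ) (ε : ℤˣ), signedCount x k ε = signedCount y k ε) : Phi x = Phi y := by
  have hP : ∀ ε, P x ε = P y ε := by
    intro ε
    ext k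
    rcases Nat.eq_zero_or_pos k with hk | hk
    · rw [hk, Multiset.count_eq_zero.2 (zero_not_mem_P x ε),
        Multiset.count_eq_zero.2 (zero_not_mem_P y ε)]
    · have := h k ε
      rw [signedCount_eq_P, signedCount_eq_P] at this
      exact Nat.eq_of_mul_eq_mul_left hk this
  exact mkSP_congr (hP 1) (hP (-1))

lemma counts_of_Phi {x y : Wr ℤˣ (Fin n)} (h : Phi x = Phi y) :
    ∀ (k : ℕ) (ε : ℤˣ), signedCount x k ε = signedCount y k ε := by
  obtain ⟨h1, h2⟩ := mkSP_inj h
  intro k ε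
  rcases Int.units_eq_one_or ε with rfl | rfl
  · rw [signedCount_eq_P, signedCount_eq_P, h1]
  · rw [signedCount_eq_P, signedCount_eq_P, h2]

lemma univ_val_map_get {α : Type*} (l : List α) :
    (Finset.univ.val.map l.get) = (l : Multiset α) := by
  rw [Fin.univ_def]
  show Multiset.map l.get ↑(List.finRange l.length) = _
  rw [Multiset.map_coe, List.map_get_finRange]

open Fin.NatCast in
lemma realize_mkSP (m₁ m₂ : Multiset ℕ) (h₁ : ∀ i ∈ m₁, 0 < i) (h₂ : ∀ i ∈ m₂, 0 < i)
    (hs : m₁.sum + m₂.sum = n) : ∃ w : Wr ℤˣ (Fin n), Phi w = mkSP m₁ m₂ h₁ h₂ hs := by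
  classical
  set M : Multiset (ℕ × ℤˣ) :=
    m₁.map (fun k => (k, (1 : ℤˣ))) + m₂.map (fun k => (k, (-1 : ℤˣ))) with hM
  set l : List (ℕ × ℤˣ) := M.toList with hldef
  have hlM : (l : Multiset (ℕ × ℤˣ)) = M := Multiset.coe_toList M
  have hMpos : ∀ p ∈ M, 0 < p.1 := by
    intro p hp
    rw [hM, Multiset.mem_add] at hp
    rcases hp with hp | hp <;> (rw [Multiset.mem_map] at hp; obtain ⟨k, hk, rfl⟩ := hp)
    exacts [h₁ k hk, h₂ k hk]
  have hlpos : ∀ b : Fin l.length, 0 < (l.get b).1 := by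
    intro b
    refine hMpos _ ?_
    rw [← hlM]
    exact Multiset.mem_coe.2 (List.get_mem l b)
  set sz : Fin l.length → ℕ := fun b => (l.get b).1 - 1 with hszdef
  set sg : Fin l.length → ℤˣ := fun b => (l.get b).2 with hsgdef
  have hsz : ∀ b, sz b + 1 = (l.get b).1 := fun b => Nat.sub_add_cancel (hlpos b)
  set σT : Perm (Σ b : Fin l.length, Fin (sz b + 1)) :=
    Equiv.sigmaCongrRight (fun b => finRotate (sz b + 1)) with hσT
  set aT : (Σ b : Fin l.length, Fin (sz b + 1)) → ℤˣ :=
    fun t => if t.2 = 0 then sg t.1 else 1 with haT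
  have hcard : Fintype.card (Σ b : Fin l.length, Fin (sz b + 1)) = n := by
    rw [Fintype.card_sigma]
    simp only [Fintype.card_fin]
    calc ∑ b, (sz b + 1) = ∑ b : Fin l.length, (l.get b).1 :=
          Finset.sum_congr rfl (fun b _ => hsz b)
      _ = (Finset.univ.val.map (fun b : Fin l.length => (l.get b).1)).sum := rfl
      _ = ((Finset.univ.val.map l.get).map Prod.fst).sum := by rw [Multiset.map_map]; rfl
      _ = (M.map Prod.fst).sum := by rw [univ_val_map_get, hlM]
      _ = m₁.sum + m₂.sum := by
          rw [hM, Multiset.map_add, Multiset.map_map, Multiset.map_map, Multiset.sum_add]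
          simp [Function.comp]
      _ = n := hs
  set e : (Σ b : Fin l.length, Fin (sz b + 1)) ≃ Fin n := Fintype.equivFinOfCardEq hcard
    with he
  set w : Wr ℤˣ (Fin n) := ⟨fun i => aT (e.symm i), (e.symm.trans σT).trans e⟩ with hw
  have hwa : ∀ t, w.a (e t) = aT t := by
    intro t
    show aT (e.symm (e t)) = aT t
    rw [e.symm_apply_apply]
  have hwp : ∀ t, w.p (e t) = e (σT t) := by
    intro t
    show e (σT (e.symm (e t))) = e (σT t)
    rw [e.symm_apply_apply]
  have hσpow : ∀ (m : ℕ) (t : Σ b : Fin l.length, Fin (sz b + 1)),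
      (σT ^ m) t = ⟨t.1, ((finRotate (sz t.1 + 1)) ^ m) t.2⟩ := by
    intro m
    induction m with
    | zero => intro t; rw [pow_zero, pow_zero]; rfl
    | succ m ih =>
        intro t
        rw [pow_succ', pow_succ', Perm.mul_apply, Perm.mul_apply, ih t]
        rfl
  have hwpow : ∀ (m : ℕ) (t), (w.p ^ m) (e t) = e ((σT ^ m) t) := by
    intro m
    induction m with
    | zero => intro t; rw [pow_zero, pow_zero]; rfl
    | succ m ih =>
        intro t
        rw [pow_succ', pow_succ', Perm.mul_apply, Perm.mul_apply, ih t, hwp]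
  have hrotpow : ∀ (k m : ℕ) (i : Fin (k + 1)),
      ((finRotate (k + 1)) ^ m) i = i + (m : Fin (k + 1)) := by
    intro k m
    induction m with
    | zero => intro i; rw [pow_zero]; simp
    | succ m ih =>
        intro i
        rw [pow_succ, Perm.mul_apply, finRotate_succ_apply, ih]
        push_cast
        abel
  have hsame : ∀ t t', w.p.SameCycle (e t) (e t') ↔ t.1 = t'.1 := by
    intro t t'
    constructor
    · intro hsc
      obtain ⟨m, _, hm⟩ := hsc.exists_pow_eq'
      rw [hwpow] at hm
      have h2 := e.injective hm
      rw [hσpow] at h2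
      have h3 := congrArg Sigma.fst h2
      simpa using h3
    · rcases t with ⟨b, i⟩
      rcases t' with ⟨b', i'⟩
      intro h
      cases h
      refine ⟨(((i' - i : Fin (sz b + 1)).val : ℕ) : ℤ), ?_⟩
      rw [zpow_natCast, hwpow]
      congr 1
      rw [hσpow]
      show (⟨b, ((finRotate (sz b + 1)) ^ ((i' - i : Fin (sz b + 1)).val)) i⟩ :
        Σ b : Fin l.length, Fin (sz b + 1)) = ⟨b, i'⟩
      congr 1
      rw [hrotpow, Fin.cast_val_eq_self, add_comm i (i' - i), sub_add_cancel]
  have hinjb : ∀ b : Fin l.length,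
      Function.Injective (fun j : Fin (sz b + 1) => e ⟨b, j⟩) := by
    intro b j j' h
    have h2 := e.injective h
    exact eq_of_heq (Sigma.mk.inj_iff.1 h2).2
  have hcls : ∀ (b : Fin l.length) (i : Fin (sz b + 1)), cls w.p (e ⟨b, i⟩) =
      Finset.image (fun j : Fin (sz b + 1) => e ⟨b, j⟩) Finset.univ := by
    intro b i
    ext x
    rw [mem_cls, Finset.mem_image]
    constructor
    · intro hsc
      have hx : x = e (e.symm x) := (e.apply_symm_apply x).symm
      rw [hx] at hsc
      have h1 := (hsame ⟨b, i⟩ (e.symm x)).1 hsc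
      rcases hsymm : e.symm x with ⟨b'', j⟩
      rw [hsymm] at h1
      cases h1
      refine ⟨j, Finset.mem_univ _, ?_⟩
      rw [← hsymm, e.apply_symm_apply]
    · rintro ⟨j, -, rfl⟩
      exact (hsame ⟨b, i⟩ ⟨b, j⟩).2 rfl
  have hlen : ∀ (b : Fin l.length) (i : Fin (sz b + 1)),
      len (qmk w.p (e ⟨b, i⟩)) = sz b + 1 := by
    intro b i
    rw [len_qmk, hcls, Finset.card_image_of_injective _ (hinjb b), Finset.card_univ,
      Fintype.card_fin]
  have hsgn : ∀ (b : Fin l.length) (i : Fin (sz b + 1)),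
      sgn w.a (qmk w.p (e ⟨b, i⟩)) = sg b := by
    intro b i
    rw [sgn_qmk, cycleProd_eq_prod_cls, hcls,
      Finset.prod_image (fun j _ j' _ h => hinjb b h)]
    have hterm : ∀ j : Fin (sz b + 1), w.a (e ⟨b, j⟩) = if j = 0 then sg b else 1 :=
      fun j => hwa ⟨b, j⟩
    rw [Finset.prod_congr rfl (fun j _ => hterm j)]
    simp
  -- the block map is a bijection onto the cycle quotient
  have hmap_inj : Function.Injective (fun b : Fin l.length => qmk w.p (e ⟨b, 0⟩)) := by
    intro b b' h
    exact (hsame ⟨b, 0⟩ ⟨b', 0⟩).1 (qmk_eq_iff.1 h)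
  have hmap_surj : Function.Surjective (fun b : Fin l.length => qmk w.p (e ⟨b, 0⟩)) := by
    intro q
    obtain ⟨x, rfl⟩ : ∃ x, qmk w.p x = q := ⟨qout q, qmk_qout q⟩
    rcases hsymm : e.symm x with ⟨b, j⟩
    refine ⟨b, ?_⟩
    have hx : x = e ⟨b, j⟩ := by rw [← hsymm, e.apply_symm_apply]
    rw [hx]
    exact qmk_eq_iff.2 ((hsame ⟨b, 0⟩ ⟨b, j⟩).2 rfl)
  set βB : Fin l.length ≃ Q w.p :=
    Equiv.ofBijective (fun b : Fin l.length => qmk w.p (e ⟨b, 0⟩)) ⟨hmap_inj, hmap_surj⟩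
    with hβB
  have hPw : ∀ ε, P w ε =
      (Finset.univ.val.filter (fun b : Fin l.length => sg b = ε)).map
        (fun b => sz b + 1) := by
    intro ε
    rw [P]
    have huniv : (Finset.univ : Finset (Q w.p)).val =
        Finset.univ.val.map (fun b : Fin l.length => qmk w.p (e ⟨b, 0⟩)) := by
      conv_lhs => rw [← Finset.map_univ_equiv βB]
      rw [Finset.map_val]
      rfl
    rw [Finset.filter_val, huniv, Multiset.filter_map, Multiset.map_map]
    rw [Multiset.filter_congr (fun b _ => by
      show sgn w.a (qmk w.p (e ⟨b, 0⟩)) = ε ↔ sg b = ε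
      rw [hsgn b 0])]
    exact Multiset.map_congr rfl (fun b _ => by
      show len (qmk w.p (e ⟨b, 0⟩)) = sz b + 1
      exact hlen b 0)
  have hfilterM : ∀ ε : ℤˣ, P w ε = (M.filter (fun p => p.2 = ε)).map Prod.fst := by
    intro ε
    rw [hPw ε, ← hlM]
    have h1 : ((l : Multiset (ℕ × ℤˣ)).filter (fun p => p.2 = ε)).map Prod.fst =
        ((Finset.univ.val.map l.get).filter (fun p => p.2 = ε)).map Prod.fst := by
      rw [univ_val_map_get]
    rw [h1, Multiset.filter_map, Multiset.map_map]
    refine Multiset.map_congr rfl (fun b hb => ?_)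
    show sz b + 1 = (l.get b).1
    exact hsz b
  have hP1 : P w 1 = m₁ := by
    rw [hfilterM 1, hM, Multiset.filter_add]
    have ha : (m₁.map (fun k => (k, (1 : ℤˣ)))).filter (fun p => p.2 = 1) =
        m₁.map (fun k => (k, (1 : ℤˣ))) := by
      rw [Multiset.filter_eq_self]
      intro p hp
      rw [Multiset.mem_map] at hp
      obtain ⟨k, _, rfl⟩ := hp
      rfl
    have hb : (m₂.map (fun k => (k, (-1 : ℤˣ)))).filter (fun p => p.2 = 1) = 0 := by
      rw [Multiset.filter_eq_nil]
      intro p hp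
      rw [Multiset.mem_map] at hp
      obtain ⟨k, _, rfl⟩ := hp
      exact (by decide : ¬ (-1 : ℤˣ) = 1)
    rw [ha, hb, add_zero, Multiset.map_map]
    simp [Function.comp]
  have hP2 : P w (-1) = m₂ := by
    rw [hfilterM (-1), hM, Multiset.filter_add]
    have ha : (m₁.map (fun k => (k, (1 : ℤˣ)))).filter (fun p => p.2 = -1) = 0 := by
      rw [Multiset.filter_eq_nil]
      intro p hp
      rw [Multiset.mem_map] at hp
      obtain ⟨k, _, rfl⟩ := hp
      exact (by decide : ¬ (1 : ℤˣ) = -1)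
    have hb : (m₂.map (fun k => (k, (-1 : ℤˣ)))).filter (fun p => p.2 = -1) =
        m₂.map (fun k => (k, (-1 : ℤˣ))) := by
      rw [Multiset.filter_eq_self]
      intro p hp
      rw [Multiset.mem_map] at hp
      obtain ⟨k, _, rfl⟩ := hp
      rfl
    rw [ha, hb, zero_add, Multiset.map_map]
    simp [Function.comp]
  exact ⟨w, mkSP_congr hP1 hP2⟩

lemma realize (sp : SignedPartition n) : ∃ w : Wr ℤˣ (Fin n), Phi w = sp := by
  obtain ⟨w, hw⟩ := realize_mkSP (n := n) sp.val.1.2.parts sp.val.2.2.parts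
    (fun _ hi => sp.val.1.2.parts_pos hi)
    (fun _ hi => sp.val.2.2.parts_pos hi)
    (by rw [sp.val.1.2.parts_sum, sp.val.2.2.parts_sum]; exact sp.prop)
  exact ⟨w, hw.trans (sp_eq_mkSP sp).symm⟩

end WrAux

/-- Two elements of `C₂ ≀ Sₙ` are conjugate iff their associated signed partitions coincide
(i.e. for every length `k` and sign `ε` they have the same number of cycles of length `k`
with cycle product `ε`); consequently the conjugacy classes of `C₂ ≀ Sₙ` are in bijection
with the signed partitions of `n`. -/
theorem wreath_conjClasses_signedPartitions (n : ℕ) :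
    (∀ x y : Wr ℤˣ (Fin n),
        IsConj x y ↔ ∀ (k : ℕ) (ε : ℤˣ), signedCount x k ε = signedCount y k ε) ∧
      Nonempty (ConjClasses (Wr ℤˣ (Fin n)) ≃ SignedPartition n) := by
  constructor
  · intro x y
    exact ⟨WrAux.counts_of_isConj x y, WrAux.isConj_of_counts x y⟩
  · have hwd : ∀ a b : Wr ℤˣ (Fin n), IsConj a b → WrAux.Phi a = WrAux.Phi b := by
      intro a b hab
      exact WrAux.Phi_eq_of_counts (WrAux.counts_of_isConj a b hab)
    refine ⟨Equiv.ofBijective (Quotient.lift (s := IsConj.setoid _) WrAux.Phi hwd) ⟨?_, ?_⟩⟩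
    · intro q1 q2
      refine Quotient.inductionOn₂ q1 q2 (fun x y h => ?_)
      exact Quotient.sound (WrAux.isConj_of_counts x y (WrAux.counts_of_Phi h))
    · intro sp
      obtain ⟨w, hw⟩ := WrAux.realize sp
      exact ⟨Quotient.mk _ w, hw⟩
end

section
/- For n even, the centralizer in C₂ ≀ Sₙ of the element x = [-1,1,…,1; σ] (first component -1, rest 1, where σ = (1,2,…,n) is an n-cycle) is the cyclic group generated by x, which has order 2n. -/
open scoped Classical

namespace WrAux

open Fin.NatCast Fin.CommRing

noncomputable def X (m : ℕ) : Wr ℤˣ (Fin (m+1)) :=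
  ⟨fun i => if i = 0 then -1 else 1, finRotate (m+1)⟩

lemma sq_one (u : ℤˣ) : u * u = 1 := by
  rcases Int.units_eq_one_or u with h | h <;> simp [h]

lemma rot_pow (m k : ℕ) : ∀ i : Fin (m+1), ((finRotate (m+1))^k) i = i + (k : Fin (m+1)) := by
  induction k with
  | zero => intro i; simp
  | succ k ih =>
    intro i
    rw [pow_succ, Equiv.Perm.mul_apply, finRotate_succ_apply, ih (i+1)]
    have : ((k+1 : ℕ) : Fin (m+1)) = (k : Fin (m+1)) + 1 := by push_cast; ring
    rw [this, add_assoc, add_comm (1 : Fin (m+1))]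

lemma X_pow_p (m k : ℕ) : ((X m)^k).p = (finRotate (m+1))^k := by
  induction k with
  | zero => rfl
  | succ k ih => simp [pow_succ, ih]; rfl

lemma X_pow_a (m : ℕ) : ∀ k, k ≤ m+1 → ∀ i : Fin (m+1),
    ((X m)^k).a i = if (i : ℕ) < k then -1 else 1 := by
  intro k
  induction k with
  | zero => intro _ i; simp
  | succ k ih =>
    intro hk i
    have hk' : k ≤ m+1 := Nat.le_of_succ_le hk
    rw [pow_succ, Wr.mul_a]
    simp only
    rw [ih hk' i, X_pow_p]
    have hinv : ((finRotate (m+1))^k)⁻¹ i = 0 ↔ i = (k : Fin (m+1)) := by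
      rw [Equiv.Perm.inv_eq_iff_eq, rot_pow, zero_add]
    have hXa : ∀ j : Fin (m+1), (X m).a j = if j = 0 then -1 else 1 := fun _ => rfl
    rw [hXa]
    have hval : ((k : Fin (m+1)) : ℕ) = k := Fin.val_cast_of_lt hk
    rcases lt_trichotomy (i : ℕ) k with h | h | h
    · have h1 : (i : ℕ) < k + 1 := by omega
      have h2 : ¬ ((finRotate (m+1))^k)⁻¹ i = 0 := by
        rw [hinv]; intro hc; rw [hc, hval] at h; omega
      rw [if_neg h2]; simp [h, h1]
    · have h2 : ((finRotate (m+1))^k)⁻¹ i = 0 := by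
        rw [hinv]; apply Fin.ext; rw [hval, h]
      simp [h, h2]
    · have h1 : ¬ (i : ℕ) < k + 1 := by omega
      have h0 : ¬ (i : ℕ) < k := by omega
      have h2 : ¬ ((finRotate (m+1))^k)⁻¹ i = 0 := by
        rw [hinv]; intro hc; rw [hc, hval] at h; omega
      rw [if_neg h2]; simp [h0, h1]

lemma rot_pow_n (m : ℕ) : (finRotate (m+1))^(m+1) = 1 := by
  ext i
  rw [rot_pow]
  simp

lemma X_pow_n (m : ℕ) : (X m)^(m+1) = ⟨fun _ => -1, 1⟩ := by
  ext i
  · rw [X_pow_a m (m+1) le_rfl i, if_pos i.isLt]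
  · rw [X_pow_p, rot_pow_n]

lemma X_pow_2n (m : ℕ) : (X m)^(2*(m+1)) = 1 := by
  rw [two_mul, pow_add, X_pow_n]
  ext i
  · simp
  · simp

lemma X_pow_n_ne_one (m : ℕ) : (X m)^(m+1) ≠ 1 := by
  rw [X_pow_n]
  intro h
  have := congrArg (fun w : Wr ℤˣ (Fin (m+1)) => w.a 0) h
  simp at this

lemma X_order (m : ℕ) : orderOf (X m) = 2*(m+1) := by
  have hd : orderOf (X m) ∣ 2*(m+1) := orderOf_dvd_of_pow_eq_one (X_pow_2n m)
  have hn1 : (m+1) ∣ orderOf (X m) := by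
    have h1 : ((X m)^(orderOf (X m))).p = 1 := by rw [pow_orderOf_eq_one]; rfl
    rw [X_pow_p] at h1
    have h0 : ((orderOf (X m) : ℕ) : Fin (m+1)) = 0 := by
      have := congrArg (fun e : Equiv.Perm (Fin (m+1)) => e 0) h1
      simpa [rot_pow] using this
    exact Fin.natCast_eq_zero.mp h0
  obtain ⟨e, he⟩ := hn1
  have h2m : 2*(m+1) = (m+1)*2 := by ring
  rw [he, h2m] at hd
  have he2 : e ∣ 2 := (mul_dvd_mul_iff_left (by omega : m+1 ≠ 0)).mp hd
  rcases (Nat.dvd_prime Nat.prime_two).mp he2 with h | h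
  · exfalso
    subst h
    rw [Nat.mul_one] at he
    have hp := pow_orderOf_eq_one (X m)
    rw [he] at hp
    exact X_pow_n_ne_one m hp
  · rw [he, h]; ring

lemma solve (A B u v : ℤˣ) (h : u = A * v * B) : v = A * B * u := by
  subst h
  rcases Int.units_eq_one_or A with hA | hA <;> rcases Int.units_eq_one_or B with hB | hB <;>
    simp [hA, hB]

section comm

variable {m : ℕ} {y : Wr ℤˣ (Fin (m+1))} (hy : X m * y = y * X m)
include hy

lemma comm_p_succ (i : Fin (m+1)) : y.p (i + 1) = y.p i + 1 := by
  have h := congrArg Wr.p hy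
  rw [Wr.mul_p, Wr.mul_p] at h
  have h2 := congrArg (fun e : Equiv.Perm (Fin (m+1)) => e i) h
  simp only [Equiv.Perm.mul_apply] at h2
  have hXp : ∀ j, (X m).p j = j + 1 := fun j => finRotate_succ_apply j
  rw [hXp, hXp] at h2
  exact h2.symm

lemma comm_p_form : ∀ k : ℕ, y.p ((k : Fin (m+1))) = y.p 0 + (k : Fin (m+1)) := by
  intro k
  induction k with
  | zero => simp
  | succ k ih =>
    have hc : ((k+1 : ℕ) : Fin (m+1)) = (k : Fin (m+1)) + 1 := by push_cast; ring
    rw [hc, comm_p_succ hy, ih, add_assoc]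

lemma comm_a_succ (j : Fin (m+1)) :
    y.a (j + 1) = (X m).a (j + 1) * (X m).a (y.p⁻¹ (j + 1)) * y.a j := by
  have h := congrArg Wr.a hy
  rw [Wr.mul_a, Wr.mul_a] at h
  have h2 := congrFun h (j + 1)
  have hXpinv : (X m).p⁻¹ (j + 1) = j := by
    rw [Equiv.Perm.inv_eq_iff_eq]
    exact (finRotate_succ_apply j).symm
  rw [hXpinv] at h2
  -- h2 : (X m).a (j+1) * y.a j = y.a (j+1) * (X m).a (y.p⁻¹ (j+1))
  apply solve
  calc y.a j = (X m).a (j+1) * ((X m).a (j+1) * y.a j) := by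
        rw [← mul_assoc, sq_one, one_mul]
    _ = (X m).a (j+1) * (y.a (j+1) * (X m).a (y.p⁻¹ (j+1))) := by rw [h2]
    _ = (X m).a (j+1) * y.a (j+1) * (X m).a (y.p⁻¹ (j+1)) := by rw [mul_assoc]

end comm

lemma centralizer_inj {m : ℕ} {y z : Wr ℤˣ (Fin (m+1))}
    (hy : X m * y = y * X m) (hz : X m * z = z * X m)
    (ha0 : y.a 0 = z.a 0) (hp0 : y.p 0 = z.p 0) : y = z := by
  have hp : y.p = z.p := by
    ext i
    have := comm_p_form hy i.val
    rw [Fin.cast_val_eq_self] at this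
    have hz' := comm_p_form hz i.val
    rw [Fin.cast_val_eq_self] at hz'
    rw [this, hz', hp0]
  have ha : ∀ k : ℕ, y.a (k : Fin (m+1)) = z.a (k : Fin (m+1)) := by
    intro k
    induction k with
    | zero => simpa using ha0
    | succ k ih =>
      have hc : ((k+1 : ℕ) : Fin (m+1)) = (k : Fin (m+1)) + 1 := by push_cast; ring
      rw [hc, comm_a_succ hy, comm_a_succ hz, ih, hp]
  ext i
  · have := ha i.val
    rw [Fin.cast_val_eq_self] at this
    rw [this]
  · rw [hp]

lemma centralizer_X (m : ℕ) :
    Subgroup.centralizer {X m} = Subgroup.zpowers (X m) := by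
  have hle : Subgroup.zpowers (X m) ≤ Subgroup.centralizer {X m} := by
    intro y hy
    obtain ⟨k, rfl⟩ := Subgroup.mem_zpowers_iff.mp hy
    rw [Subgroup.mem_centralizer_iff]
    intro g hg
    rw [Set.mem_singleton_iff] at hg
    subst hg
    exact (Commute.refl (X m)).zpow_right k
  symm
  apply Subgroup.eq_of_le_of_card_ge hle
  rw [Nat.card_zpowers, X_order]
  have hinj : Function.Injective (fun y : Subgroup.centralizer {X m} =>
      ((y : Wr ℤˣ (Fin (m+1))).a 0, (y : Wr ℤˣ (Fin (m+1))).p 0)) := by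
    rintro ⟨y, hy⟩ ⟨z, hz⟩ h
    simp only [Prod.mk.injEq] at h
    have hy' : X m * y = y * X m :=
      (Subgroup.mem_centralizer_iff.mp hy) (X m) (Set.mem_singleton _)
    have hz' : X m * z = z * X m :=
      (Subgroup.mem_centralizer_iff.mp hz) (X m) (Set.mem_singleton _)
    exact Subtype.ext (centralizer_inj hy' hz' h.1 h.2)
  calc Nat.card (Subgroup.centralizer {X m})
      ≤ Nat.card (ℤˣ × Fin (m+1)) := Nat.card_le_card_of_injective _ hinj
    _ = 2*(m+1) := by
        rw [Nat.card_prod, Nat.card_eq_fintype_card, Nat.card_eq_fintype_card,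
          Fintype.card_units_int, Fintype.card_fin]

end WrAux

/-- For `n` even, the centralizer in `C₂ ≀ Sₙ` of `x = [-1,1,…,1; (1 2 … n)]` is the cyclic
group generated by `x`, of order `2n`. -/
theorem centralizer_negative_n_cycle (n : ℕ) (hn : 0 < n) (he : Even n)
    (x : Wr ℤˣ (Fin n))
    (hx : x = ⟨fun i => if i = (⟨0, hn⟩ : Fin n) then -1 else 1, finRotate n⟩) :
    Subgroup.centralizer {x} = Subgroup.zpowers x ∧ orderOf x = 2 * n := by
  obtain ⟨m, rfl⟩ : ∃ m, n = m + 1 := ⟨n - 1, (Nat.succ_pred_eq_of_pos hn).symm⟩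
  have hxX : x = WrAux.X m := by
    rw [hx]
    ext i
    · simp [WrAux.X, Fin.mk_zero]
      split_ifs <;> simp_all
    · rfl
  rw [hxX]
  exact ⟨WrAux.centralizer_X m, WrAux.X_order m⟩
end

section
/- The sum over all signed partitions λ± of n of 1/(∏_{i=1}^{n} (2i)^{a_i} a_i! · ∏_{j=1}^{n} (2j)^{b_j} b_j!) equals 1, where a_i (resp. b_j) is the number of positive (resp. negative) parts of λ± equal to i (resp. j). -/
open scoped Classical

noncomputable section AuxPartition

open Finset

/-- centralizer-order weight of a multiset of parts -/
def Zw (s : Multiset ℕ) : ℕ :=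
  ∏ i ∈ s.toFinset, (2 * i) ^ (s.count i) * (s.count i).factorial

lemma Zw_eq_prod (s : Multiset ℕ) {F : Finset ℕ} (h : s.toFinset ⊆ F) :
    Zw s = ∏ i ∈ F, (2 * i) ^ (s.count i) * (s.count i).factorial := by
  rw [Zw]
  refine Finset.prod_subset h ?_
  intro x _ hx
  rw [Multiset.count_eq_zero_of_notMem (by simpa using hx)]
  simp

lemma Zw_pos (s : Multiset ℕ) (hs : ∀ i ∈ s, 0 < i) : 0 < Zw s := by
  rw [Zw]
  refine Finset.prod_pos ?_
  intro i hi
  have : 0 < i := hs i (Multiset.mem_toFinset.mp hi)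
  positivity

lemma Zw_cons (i : ℕ) (s : Multiset ℕ) :
    Zw (i ::ₘ s) = (2 * i) * (s.count i + 1) * Zw s := by
  have hsub : s.toFinset ⊆ insert i s.toFinset := Finset.subset_insert _ _
  have h1 : Zw (i ::ₘ s) = ∏ j ∈ insert i s.toFinset,
      (2 * j) ^ ((i ::ₘ s).count j) * ((i ::ₘ s).count j).factorial := by
    rw [Zw_eq_prod (i ::ₘ s) (by rw [Multiset.toFinset_cons])]
  have h2 : Zw s = ∏ j ∈ insert i s.toFinset,
      (2 * j) ^ (s.count j) * (s.count j).factorial := Zw_eq_prod s hsub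
  have hmem : i ∈ insert i s.toFinset := Finset.mem_insert_self _ _
  rw [h1, ← Finset.mul_prod_erase _ _ hmem, h2, ← Finset.mul_prod_erase _ _ hmem]
  have hrest : ∏ j ∈ (insert i s.toFinset).erase i,
      (2 * j) ^ ((i ::ₘ s).count j) * ((i ::ₘ s).count j).factorial
      = ∏ j ∈ (insert i s.toFinset).erase i,
      (2 * j) ^ (s.count j) * (s.count j).factorial := by
    refine Finset.prod_congr rfl ?_
    intro j hj
    have hne : j ≠ i := (Finset.mem_erase.mp hj).1
    rw [Multiset.count_cons_of_ne hne]
  rw [hrest, Multiset.count_cons_self]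
  rw [pow_succ, Nat.factorial_succ]
  ring

/-- sum over partitions of reciprocal centralizer weights -/
def A (m : ℕ) : ℚ := ∑ p : Nat.Partition m, ((Zw p.parts : ℚ))⁻¹

lemma Zw_parts_pos {m : ℕ} (p : Nat.Partition m) : 0 < Zw p.parts :=
  Zw_pos _ fun _ hi => p.parts_pos hi

lemma A_zero : A 0 = 1 := by
  rw [A, Fintype.sum_unique]
  have : (default : Nat.Partition 0).parts = 0 := rfl
  rw [this]
  simp [Zw]

lemma parts_subset_Icc {m n : ℕ} (hmn : m ≤ n) (p : Nat.Partition m) :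
    p.parts.toFinset ⊆ Finset.Icc 1 n := by
  intro j hj
  have hj' : j ∈ p.parts := Multiset.mem_toFinset.mp hj
  have h1 : 0 < j := p.parts_pos hj'
  have h2 : j ≤ m := p.parts_sum ▸ Multiset.single_le_sum (fun x _ => Nat.zero_le x) _ hj'
  exact Finset.mem_Icc.mpr ⟨h1, le_trans h2 hmn⟩

lemma A_rec (m : ℕ) : (2 * m : ℚ) * A m = ∑ j ∈ Finset.range m, A j := by
  rcases Nat.eq_zero_or_pos m with hm | hm
  · subst hm; simp
  -- step 1 : 2*m as a sum of 2*i*count i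
  have key : ∀ p : Nat.Partition m,
      ∑ i ∈ Finset.Icc 1 m, 2 * i * p.parts.count i = 2 * m := by
    intro p
    have h0 : ∑ i ∈ p.parts.toFinset, p.parts.count i * i = m := by
      have := (Finset.sum_multiset_count p.parts).symm.trans p.parts_sum
      simpa [smul_eq_mul] using this
    have hext : ∑ i ∈ p.parts.toFinset, p.parts.count i * i
        = ∑ i ∈ Finset.Icc 1 m, p.parts.count i * i := by
      refine Finset.sum_subset (parts_subset_Icc le_rfl p) ?_
      intro x _ hx
      rw [Multiset.count_eq_zero_of_notMem (by simpa using hx)]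
      ring
    have h1 : ∑ i ∈ Finset.Icc 1 m, p.parts.count i * i = m := hext ▸ h0
    calc ∑ i ∈ Finset.Icc 1 m, 2 * i * p.parts.count i
        = 2 * ∑ i ∈ Finset.Icc 1 m, p.parts.count i * i := by
          rw [Finset.mul_sum]; exact Finset.sum_congr rfl fun i _ => by ring
      _ = 2 * m := by rw [h1]
  have lhs1 : (2 * m : ℚ) * A m
      = ∑ i ∈ Finset.Icc 1 m, ∑ p : Nat.Partition m,
          ((2 * i * p.parts.count i : ℕ) : ℚ) * ((Zw p.parts : ℚ))⁻¹ := by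
    rw [A, Finset.mul_sum, Finset.sum_comm]
    refine Finset.sum_congr rfl ?_
    intro p _
    rw [← Finset.sum_mul, ← Nat.cast_sum, key p]
    push_cast
    ring
  rw [lhs1]
  -- step 2: inner sum is A (m - i)
  have step2 : ∀ i ∈ Finset.Icc 1 m,
      (∑ p : Nat.Partition m, ((2 * i * p.parts.count i : ℕ) : ℚ) * ((Zw p.parts : ℚ))⁻¹)
      = A (m - i) := by
    intro i hi
    obtain ⟨hi1, hi2⟩ := Finset.mem_Icc.mp hi
    have hfilter : ∑ p ∈ Finset.univ.filter (fun p : Nat.Partition m => i ∈ p.parts),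
        ((2 * i * p.parts.count i : ℕ) : ℚ) * ((Zw p.parts : ℚ))⁻¹
        = ∑ p : Nat.Partition m,
        ((2 * i * p.parts.count i : ℕ) : ℚ) * ((Zw p.parts : ℚ))⁻¹ := by
      refine Finset.sum_filter_of_ne ?_
      intro p _ hne
      by_contra hmem
      rw [Multiset.count_eq_zero_of_notMem hmem] at hne
      simp at hne
    rw [← hfilter, A]
    refine (Finset.sum_bij
      (i := fun (q : Nat.Partition (m - i)) _ =>
        (⟨i ::ₘ q.parts,
          fun hj => by
            rcases Multiset.mem_cons.mp hj with h | h
            · omega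
            · exact q.parts_pos h,
          by rw [Multiset.sum_cons, q.parts_sum]; omega⟩ : Nat.Partition m))
      ?_ ?_ ?_ ?_).symm
    · intro q _
      simp
    · intro q1 h1 q2 h2 heq
      have := congrArg Nat.Partition.parts heq
      simp only at this
      ext1
      exact (Multiset.cons_inj_right i).mp (by simpa using this)
    · intro p hp
      have hp' : i ∈ p.parts := by simpa using hp
      have hsum : i + (p.parts.erase i).sum = p.parts.sum := by
        conv_rhs => rw [← Multiset.cons_erase hp']
        rw [Multiset.sum_cons]
      have hps := p.parts_sum
      refine ⟨⟨p.parts.erase i,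
        fun hj => p.parts_pos (Multiset.mem_of_mem_erase hj), by omega⟩,
        Finset.mem_univ _, ?_⟩
      ext1
      simpa using Multiset.cons_erase hp'
    · intro q _
      have hcount : (i ::ₘ q.parts).count i = q.parts.count i + 1 :=
        Multiset.count_cons_self _ _
      rw [Zw_cons]
      simp only [hcount]
      have hzpos : (0:ℚ) < (Zw q.parts : ℚ) := by
        exact_mod_cast Zw_parts_pos q
      have h2i : (0:ℚ) < ((2 * i * (q.parts.count i + 1) : ℕ) : ℚ) := by
        have : 0 < 2 * i * (q.parts.count i + 1) := by positivity
        exact_mod_cast this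
        --
      push_cast
      field_simp
  rw [Finset.sum_congr rfl step2]
  -- step 3: reindex
  refine Finset.sum_nbij' (i := fun i => m - i) (j := fun j => m - j) ?_ ?_ ?_ ?_ ?_
  · intro a ha
    simp only [Finset.mem_Icc] at ha
    simp only [Finset.mem_range]
    omega
  · intro a ha
    simp only [Finset.mem_range] at ha
    simp only [Finset.mem_Icc]
    omega
  · intro a ha
    simp only [Finset.mem_Icc] at ha
    show m - (m - a) = a
    omega
  · intro a ha
    simp only [Finset.mem_range] at ha
    show m - (m - a) = a
    omega
  · intro a _
    rfl


lemma conv_tri (n : ℕ) (f : ℕ → ℕ → ℚ) :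
    ∑ k ∈ Finset.range (n+1), ∑ j ∈ Finset.range k, f j (n - k)
      = ∑ m ∈ Finset.range n, ∑ s ∈ Finset.range (m+1), f s (m - s) := by
  rw [Finset.sum_sigma', Finset.sum_sigma']
  refine Finset.sum_bij' (i := fun x _ => ⟨x.2 + (n - x.1), x.2⟩)
    (j := fun y _ => ⟨n - (y.1 - y.2), y.2⟩) ?_ ?_ ?_ ?_ ?_
  · rintro ⟨a, b⟩ hx
    simp only [Finset.mem_sigma, Finset.mem_range] at hx ⊢
    omega
  · rintro ⟨a, b⟩ hx
    simp only [Finset.mem_sigma, Finset.mem_range] at hx ⊢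
    omega
  · rintro ⟨a, b⟩ hx
    simp only [Finset.mem_sigma, Finset.mem_range] at hx
    simp only [show n - (b + (n - a) - b) = a from by omega]
  · rintro ⟨a, b⟩ hx
    simp only [Finset.mem_sigma, Finset.mem_range] at hx
    simp only [show b + (n - (n - (a - b))) = a from by omega]
  · rintro ⟨a, b⟩ hx
    simp only [Finset.mem_sigma, Finset.mem_range] at hx
    dsimp only
    congr 1
    omega

lemma conv_one (n : ℕ) : ∑ k ∈ Finset.range (n+1), A k * A (n - k) = 1 := by
  induction n using Nat.strong_induction_on with
  | _ n ih =>
  rcases Nat.eq_zero_or_pos n with hn | hn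
  · subst hn; simp [A_zero]
  set F : ℕ → ℚ := fun j => 2 * (j : ℚ) * A j * A (n - j) with hF
  have hsplit : ∀ k ∈ Finset.range (n+1),
      (2 * n : ℚ) * (A k * A (n - k)) = F k + F (n - k) := by
    intro k hk
    have hk' : k ≤ n := by simpa [Nat.lt_succ_iff] using hk
    have h1 : n - (n - k) = k := by omega
    have h3 : (k : ℚ) + ((n - k : ℕ) : ℚ) = (n : ℚ) := by
      have := Nat.add_sub_cancel' hk'
      exact_mod_cast congrArg (Nat.cast : ℕ → ℚ) this
    simp only [hF, h1]
    linear_combination (-2 * A k * A (n - k)) * h3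
  have hrefl : ∑ k ∈ Finset.range (n+1), F (n - k) = ∑ k ∈ Finset.range (n+1), F k := by
    simpa using Finset.sum_range_reflect F (n+1)
  have key : (2 * n : ℚ) * ∑ k ∈ Finset.range (n+1), A k * A (n - k)
      = 2 * ∑ k ∈ Finset.range (n+1), F k := by
    rw [Finset.mul_sum, Finset.sum_congr rfl hsplit, Finset.sum_add_distrib, hrefl]
    ring
  have hS1 : ∑ k ∈ Finset.range (n+1), F k = (n : ℚ) := by
    have h1 : ∀ k ∈ Finset.range (n+1),
        F k = ∑ j ∈ Finset.range k, A j * A (n - k) := by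
      intro k _
      rw [hF]
      simp only
      rw [A_rec k, Finset.sum_mul]
    rw [Finset.sum_congr rfl h1, conv_tri n (fun s t => A s * A t)]
    have h2 : ∀ m ∈ Finset.range n,
        ∑ s ∈ Finset.range (m+1), A s * A (m - s) = 1 := by
      intro m hm
      exact ih m (Finset.mem_range.mp hm)
    rw [Finset.sum_congr rfl h2]
    simp
  have h2n : (2 * n : ℚ) ≠ 0 := by
    have : (0:ℚ) < (n:ℚ) := by exact_mod_cast hn
    positivity
  have : (2 * n : ℚ) * ∑ k ∈ Finset.range (n+1), A k * A (n - k) = (2 * n : ℚ) * 1 := by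
    rw [key, hS1]; ring
  exact mul_left_cancel₀ h2n this

end AuxPartition

/-- The sum over all signed partitions of `n` of the reciprocals of the centralizer orders
equals `1`. -/
theorem sum_inv_centralizer_orders (n : ℕ) :
    ∑ k ∈ Finset.range (n + 1), ∑ p : Nat.Partition k, ∑ q : Nat.Partition (n - k),
        (1 : ℚ) / ((∏ i ∈ Finset.Icc 1 n,
          (2 * i) ^ (p.parts.count i) * (p.parts.count i).factorial *
            ((2 * i) ^ (q.parts.count i) * (q.parts.count i).factorial) : ℕ) : ℚ) = 1 := by
  have main : ∀ k ∈ Finset.range (n+1),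
      (∑ p : Nat.Partition k, ∑ q : Nat.Partition (n - k),
        (1 : ℚ) / ((∏ i ∈ Finset.Icc 1 n,
          (2 * i) ^ (p.parts.count i) * (p.parts.count i).factorial *
            ((2 * i) ^ (q.parts.count i) * (q.parts.count i).factorial) : ℕ) : ℚ))
      = A k * A (n - k) := by
    intro k hk
    have hk' : k ≤ n := by simpa [Nat.lt_succ_iff] using hk
    have hterm : ∀ (p : Nat.Partition k) (q : Nat.Partition (n - k)),
        (∏ i ∈ Finset.Icc 1 n,
          (2 * i) ^ (p.parts.count i) * (p.parts.count i).factorial *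
            ((2 * i) ^ (q.parts.count i) * (q.parts.count i).factorial))
        = Zw p.parts * Zw q.parts := by
      intro p q
      rw [Finset.prod_mul_distrib,
        ← Zw_eq_prod _ (parts_subset_Icc hk' p),
        ← Zw_eq_prod _ (parts_subset_Icc (Nat.sub_le n k) q)]
    rw [A, A, Finset.sum_mul_sum]
    refine Finset.sum_congr rfl fun p _ => Finset.sum_congr rfl fun q _ => ?_
    rw [hterm p q]
    push_cast
    rw [one_div, mul_inv]
  rw [Finset.sum_congr rfl main]
  exact conv_one n
end

section
/- For every n ≥ 1 and r ≥ 1, the expression (1/(2ⁿ n!)) · ∑_{w ∈ C₂ ≀ Sₙ} det(I + x·A_w)^r equals ∑_{λ± ∈ 𝒫ₙ^±} [∏_{i=1}^{n} (1-(-x)^i)^{a_i r} · ∏_{j=1}^{n} (1+(-x)^j)^{b_j r}] / [∏_{i=1}^{n} (2i)^{a_i} a_i! · ∏_{j=1}^{n} (2j)^{b_j} b_j!], where A_w is the signed permutation matrix of w acting on ℂⁿ, and a_i, b_j are the numbers of positive/negative parts of the signed partition λ± equal to i, j. -/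
open scoped Classical

/-- The signed permutation matrix of `w ∈ C₂ ≀ Sₙ` acting on `H¹(T,ℂ) ≅ ℂⁿ`:
`e_j ↦ (w.a (w.p j)) • e_{w.p j}`. -/
noncomputable def Aw {n : ℕ} (w : Wr ℤˣ (Fin n)) : Matrix (Fin n) (Fin n) ℂ :=
  Matrix.of fun i j => if i = w.p j then ((w.a i : ℤ) : ℂ) else 0


lemma units_sum (H : ℤˣ → ℂ) : ∑ ε : ℤˣ, H ε = H 1 + H (-1) := by
  rw [show (Finset.univ : Finset ℤˣ) = {1, -1} by decide]
  simp

lemma prodSign_sum (k : ℕ) (H : ℤˣ → ℂ) :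
    ∑ s : Fin (k+1) → ℤˣ, H (∏ i, s i) = 2^k * (H 1 + H (-1)) := by
  induction k generalizing H with
  | zero =>
    rw [Fintype.sum_equiv (Equiv.funUnique (Fin 1) ℤˣ) _ (fun ε => H ε) (fun f => by
      simp [Equiv.funUnique])]
    simp [units_sum]
  | succ k ih =>
    rw [← ((Fin.consEquiv (fun _ : Fin (k+2) => ℤˣ))).sum_comp]
    rw [Fintype.sum_prod_type]
    simp only [Fin.consEquiv_apply, Fin.prod_cons]
    rw [units_sum (fun ε => ∑ s : Fin (k+1) → ℤˣ, H (ε * ∏ i, s i))]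
    rw [ih (fun u => H (1 * u)), ih (fun u => H (-1 * u))]
    simp only [one_mul, neg_mul, neg_neg]
    ring


lemma rot_ne (k : ℕ) (i : Fin (k+2)) : finRotate (k+2) i ≠ i := by
  rw [finRotate_succ_apply]
  intro h
  rw [add_eq_left] at h
  exact absurd (Fin.one_eq_zero_iff.mp h) (by omega)

lemma perm_dichotomy (k : ℕ) (τ : Equiv.Perm (Fin (k+2)))
    (h : ∀ i, τ i = i ∨ τ i = finRotate (k+2) i) : τ = 1 ∨ τ = finRotate (k+2) := by
  by_cases h1 : ∀ i, τ i = i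
  · exact Or.inl (Equiv.ext h1)
  · right
    push_neg at h1
    obtain ⟨i₀, hi₀⟩ := h1
    have hi₀' : τ i₀ = finRotate (k+2) i₀ := (h i₀).resolve_left hi₀
    have closure : ∀ i, τ i = finRotate (k+2) i →
        τ (finRotate (k+2) i) = finRotate (k+2) (finRotate (k+2) i) := by
      intro i hi
      rcases h (finRotate (k+2) i) with h' | h'
      · exfalso
        have : τ (finRotate (k+2) i) = τ i := by rw [h', hi]
        exact rot_ne k i (τ.injective this)
      · exact h'
    have hpow : ∀ z : ℕ, τ ((finRotate (k+2) ^ z) i₀) = finRotate (k+2) ((finRotate (k+2) ^ z) i₀) := by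
      intro z
      induction z with
      | zero => simpa using hi₀'
      | succ z ih =>
        have e : (finRotate (k+2) ^ (z+1)) i₀ = finRotate (k+2) ((finRotate (k+2) ^ z) i₀) := by
          rw [pow_succ']; rfl
        rw [e]
        exact closure _ ih
    apply Equiv.ext
    intro j
    obtain ⟨z, hz⟩ := isCycle_finRotate.exists_pow_eq (rot_ne k i₀) (rot_ne k j)
    rw [← hz]
    exact hpow z

lemma det_cycle_aux (k : ℕ) (s : Fin (k+2) → ℤˣ) (x : ℂ) :
    (Matrix.of (fun a b : Fin (k+2) =>
        (if a = b then (1:ℂ) else 0) + x * (if a = finRotate (k+2) b then ((s a : ℤ) : ℂ) else 0))).det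
      = 1 + (-1 : ℂ)^(k+1) * x^(k+2) * (((∏ i, s i : ℤˣ) : ℤ) : ℂ) := by
  rw [Matrix.det_apply]
  have hone_ne : (1 : Equiv.Perm (Fin (k+2))) ≠ finRotate (k+2) := by
    intro h
    exact rot_ne k 0 (congrFun (congrArg _ h.symm) 0)
  rw [← Finset.sum_subset (Finset.subset_univ ({1, finRotate (k+2)} : Finset (Equiv.Perm (Fin (k+2)))))]
  · rw [Finset.sum_pair hone_ne]
    have t1 : (∏ i : Fin (k+2), Matrix.of (fun a b : Fin (k+2) =>
        (if a = b then (1:ℂ) else 0) + x * (if a = finRotate (k+2) b then ((s a : ℤ) : ℂ) else 0))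
          ((1 : Equiv.Perm (Fin (k+2))) i) i) = 1 := by
      apply Finset.prod_eq_one
      intro i _
      simp [if_neg (Ne.symm (rot_ne k i))]
    have t2 : (∏ i : Fin (k+2), Matrix.of (fun a b : Fin (k+2) =>
        (if a = b then (1:ℂ) else 0) + x * (if a = finRotate (k+2) b then ((s a : ℤ) : ℂ) else 0))
          (finRotate (k+2) i) i) = x^(k+2) * (((∏ i, s i : ℤˣ) : ℤ) : ℂ) := by
      have t2' : ∀ i : Fin (k+2), Matrix.of (fun a b : Fin (k+2) =>
        (if a = b then (1:ℂ) else 0) + x * (if a = finRotate (k+2) b then ((s a : ℤ) : ℂ) else 0))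
          (finRotate (k+2) i) i = x * ((s (finRotate (k+2) i) : ℤ) : ℂ) := by
        intro i
        simp [if_neg (rot_ne k i)]
      rw [Finset.prod_congr rfl (fun i _ => t2' i), Finset.prod_mul_distrib]
      have : ∏ i : Fin (k+2), ((s (finRotate (k+2) i) : ℤ) : ℂ) = ∏ i : Fin (k+2), ((s i : ℤ) : ℂ) :=
        Equiv.prod_comp (finRotate (k+2)) (fun i => ((s i : ℤ) : ℂ))
      rw [this]
      simp only [Finset.prod_const, Finset.card_univ, Fintype.card_fin]
      push_cast
      ring
    rw [t1, t2]
    have hsign : Equiv.Perm.sign (finRotate (k+2)) = (-1 : ℤˣ)^(k+1) := by simp [sign_finRotate]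
    rw [hsign]
    simp only [Equiv.Perm.sign_one, one_smul, Units.smul_def, zsmul_eq_mul]
    push_cast
    ring
  · intro τ _ hτ
    simp only [Finset.mem_insert, Finset.mem_singleton] at hτ
    push_neg at hτ
    have : ¬ (∀ i, τ i = i ∨ τ i = finRotate (k+2) i) := by
      intro hall
      rcases perm_dichotomy k τ hall with h | h
      exacts [hτ.1 h, hτ.2 h]
    push_neg at this
    obtain ⟨i, hi1, hi2⟩ := this
    have hz : Matrix.of (fun a b : Fin (k+2) =>
        (if a = b then (1:ℂ) else 0) + x * (if a = finRotate (k+2) b then ((s a : ℤ) : ℂ) else 0))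
          (τ i) i = 0 := by
      simp only [Matrix.of_apply]
      rw [if_neg hi1, if_neg hi2]
      ring
    have hp : (∏ j : Fin (k+2), Matrix.of (fun a b : Fin (k+2) =>
        (if a = b then (1:ℂ) else 0) + x * (if a = finRotate (k+2) b then ((s a : ℤ) : ℂ) else 0))
          (τ j) j) = 0 := Finset.prod_eq_zero (Finset.mem_univ i) hz
    rw [hp]
    simp

lemma det_cycle (k : ℕ) (s : Fin (k+1) → ℤˣ) (x : ℂ) :
    ((1 : Matrix (Fin (k+1)) (Fin (k+1)) ℂ) +
        x • Matrix.of (fun i i' => if i = finRotate (k+1) i' then ((s i : ℤ) : ℂ) else 0)).det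
      = 1 - (((∏ i, s i : ℤˣ) : ℤ) : ℂ) * (-x)^(k+1) := by
  cases k with
  | zero =>
    rw [Matrix.det_fin_one]
    simp [Matrix.one_apply]
    ring
  | succ k =>
    have hM : ((1 : Matrix (Fin (k+2)) (Fin (k+2)) ℂ) +
        x • Matrix.of (fun i i' => if i = finRotate (k+2) i' then ((s i : ℤ) : ℂ) else 0)) =
        Matrix.of (fun a b : Fin (k+2) =>
        (if a = b then (1:ℂ) else 0) + x * (if a = finRotate (k+2) b then ((s a : ℤ) : ℂ) else 0)) := by
      ext a b
      simp [Matrix.one_apply, mul_ite]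
    rw [hM, det_cycle_aux]
    have h2 : ((-x) : ℂ)^(k+2) = -((-1:ℂ)^(k+1) * x^(k+2)) := by
      rw [neg_pow, pow_succ (-1 : ℂ) (k+1)]
      ring
    rw [h2]
    ring

noncomputable def Mm {α : Type*} [Fintype α] [DecidableEq α] (p : Equiv.Perm α) (a : α → ℤˣ) :
    Matrix α α ℂ :=
  Matrix.of fun i j => if i = p j then ((a i : ℤ) : ℂ) else 0

lemma Aw_eq {n : ℕ} (w : Wr ℤˣ (Fin n)) : Aw w = Mm w.p w.a := rfl

lemma Mm_block {α β : Type*} [Fintype α] [DecidableEq α] [Fintype β] [DecidableEq β]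
    (ρ : Equiv.Perm α) (π : Equiv.Perm β) (s : α → ℤˣ) (a' : β → ℤˣ) :
    Mm (Equiv.sumCongr ρ π) (Sum.elim s a') =
      Matrix.fromBlocks (Mm ρ s) 0 0 (Mm π a') := by
  ext i j
  cases i <;> cases j <;>
    simp [Mm, Matrix.fromBlocks, Equiv.sumCongr_apply, Sum.map]

section Theta

variable {n : ℕ}

def cgf (j : ℕ) (g : Fin j ↪ Fin n) : Fin (j+1) → Fin (n+1) :=
  Fin.cases 0 (fun i => (g i).succ)

lemma cgf_zero (j : ℕ) (g : Fin j ↪ Fin n) : cgf j g 0 = 0 := rfl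

lemma cgf_succ (j : ℕ) (g : Fin j ↪ Fin n) (i : Fin j) : cgf j g i.succ = (g i).succ := by
  simp [cgf]

lemma cgf_injective (j : ℕ) (g : Fin j ↪ Fin n) : Function.Injective (cgf j g) := by
  intro a b
  induction a using Fin.cases with
  | zero =>
    induction b using Fin.cases with
    | zero => intro; rfl
    | succ b =>
      rw [cgf_zero, cgf_succ]
      intro h
      exact absurd h.symm (Fin.succ_ne_zero _)
  | succ a =>
    induction b using Fin.cases with
    | zero =>
      rw [cgf_zero, cgf_succ]
      intro h
      exact absurd h (Fin.succ_ne_zero _)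
    | succ b =>
      rw [cgf_succ, cgf_succ]
      intro h
      rw [g.injective (Fin.succ_injective _ h)]

def Tc (j : ℕ) (g : Fin j ↪ Fin n) : Finset (Fin (n+1)) :=
  Finset.univ \ Finset.image (cgf j g) Finset.univ

lemma Tc_card (j : ℕ) (hj : j ≤ n) (g : Fin j ↪ Fin n) : (Tc j g).card = n - j := by
  rw [Tc, Finset.card_sdiff_of_subset (Finset.subset_univ _), Finset.card_image_of_injective _ (cgf_injective j g)]
  simp only [Finset.card_univ, Fintype.card_fin]
  omega

noncomputable def ce (j : ℕ) (hj : j ≤ n) (g : Fin j ↪ Fin n) : Fin (n - j) ↪o Fin (n+1) :=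
  (Tc j g).orderEmbOfFin (Tc_card j hj g)

lemma ce_mem (j : ℕ) (hj : j ≤ n) (g : Fin j ↪ Fin n) (i : Fin (n - j)) :
    ce j hj g i ∈ Tc j g :=
  Finset.orderEmbOfFin_mem _ _ _

noncomputable def ψ (j : ℕ) (hj : j ≤ n) (g : Fin j ↪ Fin n) :
    (Fin (j+1) ⊕ Fin (n - j)) ≃ Fin (n+1) := by
  apply Equiv.ofBijective (Sum.elim (cgf j g) (fun i => ce j hj g i))
  rw [Fintype.bijective_iff_injective_and_card]
  constructor
  · intro a b
    cases a with
    | inl a =>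
      cases b with
      | inl b => intro h; rw [cgf_injective j g h]
      | inr b =>
        intro h
        exfalso
        have hmem := ce_mem j hj g b
        rw [Tc, Finset.mem_sdiff] at hmem
        exact hmem.2 (Finset.mem_image.mpr ⟨a, Finset.mem_univ _, h⟩)
    | inr a =>
      cases b with
      | inl b =>
        intro h
        exfalso
        have hmem := ce_mem j hj g a
        rw [Tc, Finset.mem_sdiff] at hmem
        exact hmem.2 (Finset.mem_image.mpr ⟨b, Finset.mem_univ _, h.symm⟩)
      | inr b =>
        intro h
        rw [(ce j hj g).injective h]
  · simp only [Fintype.card_sum, Fintype.card_fin]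
    omega

noncomputable def Θc (j : ℕ) (hj : j ≤ n) (g : Fin j ↪ Fin n) (s : Fin (j+1) → ℤˣ)
    (w' : Wr ℤˣ (Fin (n - j))) : Wr ℤˣ (Fin (n+1)) :=
  ⟨Sum.elim s w'.a ∘ (ψ j hj g).symm,
    (ψ j hj g).permCongr (Equiv.sumCongr (finRotate (j+1)) w'.p)⟩

lemma Θc_p_apply (j : ℕ) (hj : j ≤ n) (g : Fin j ↪ Fin n) (s : Fin (j+1) → ℤˣ)
    (w' : Wr ℤˣ (Fin (n - j))) (k : Fin (n+1)) :
    (Θc j hj g s w').p k =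
      ψ j hj g ((Equiv.sumCongr (finRotate (j+1)) w'.p) ((ψ j hj g).symm k)) := by
  simp [Θc, Equiv.permCongr_apply]

lemma Θc_a_apply (j : ℕ) (hj : j ≤ n) (g : Fin j ↪ Fin n) (s : Fin (j+1) → ℤˣ)
    (w' : Wr ℤˣ (Fin (n - j))) (k : Fin (n+1)) :
    (Θc j hj g s w').a k = Sum.elim s w'.a ((ψ j hj g).symm k) := rfl

lemma det_Θc (j : ℕ) (hj : j ≤ n) (g : Fin j ↪ Fin n) (s : Fin (j+1) → ℤˣ)
    (w' : Wr ℤˣ (Fin (n - j))) (x : ℂ) :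
    ((1 : Matrix (Fin (n+1)) (Fin (n+1)) ℂ) + x • Aw (Θc j hj g s w')).det
      = (1 - (((∏ i, s i : ℤˣ) : ℤ) : ℂ) * (-x)^(j+1)) *
          ((1 : Matrix (Fin (n-j)) (Fin (n-j)) ℂ) + x • Aw w').det := by
  have hM : Aw (Θc j hj g s w') =
      (Mm (Equiv.sumCongr (finRotate (j+1)) w'.p) (Sum.elim s w'.a)).submatrix
        ((ψ j hj g).symm) ((ψ j hj g).symm) := by
    ext i k
    simp only [Aw, Matrix.of_apply, Matrix.submatrix_apply, Mm, Θc_p_apply, Θc_a_apply]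
    exact (if_congr (Equiv.symm_apply_eq _) rfl rfl).symm
  rw [hM]
  have halg : (1 : Matrix (Fin (n+1)) (Fin (n+1)) ℂ) +
      x • (Mm (Equiv.sumCongr (finRotate (j+1)) w'.p) (Sum.elim s w'.a)).submatrix
        ((ψ j hj g).symm) ((ψ j hj g).symm)
      = ((1 : Matrix (Fin (j+1) ⊕ Fin (n-j)) (Fin (j+1) ⊕ Fin (n-j)) ℂ) +
          x • Mm (Equiv.sumCongr (finRotate (j+1)) w'.p) (Sum.elim s w'.a)).submatrix
        ((ψ j hj g).symm) ((ψ j hj g).symm) := by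
    ext a b
    simp [Matrix.add_apply, Matrix.smul_apply, Matrix.submatrix_apply, Matrix.one_apply,
      EmbeddingLike.apply_eq_iff_eq]
  rw [halg, Matrix.det_submatrix_equiv_self, Mm_block]
  have hblocks : (1 : Matrix (Fin (j+1) ⊕ Fin (n-j)) (Fin (j+1) ⊕ Fin (n-j)) ℂ) +
      x • Matrix.fromBlocks (Mm (finRotate (j+1)) s) 0 0 (Mm w'.p w'.a)
      = Matrix.fromBlocks (1 + x • Mm (finRotate (j+1)) s) 0 0 (1 + x • Mm w'.p w'.a) := by
    rw [← Matrix.fromBlocks_one, Matrix.fromBlocks_smul, Matrix.fromBlocks_add]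
    simp
  rw [hblocks, Matrix.det_fromBlocks_zero₂₁]
  rw [Aw_eq]
  congr 1
  exact det_cycle j s x

end Theta


section Peel

variable {n : ℕ}

lemma cgf_eq_psi_inl (j : ℕ) (hj : j ≤ n) (g : Fin j ↪ Fin n) (t : Fin (j+1)) :
    cgf j g t = ψ j hj g (Sum.inl t) := rfl

lemma cgf_ne_zero (j : ℕ) (g : Fin j ↪ Fin n) (t : Fin (j+1)) (ht : t ≠ 0) :
    cgf j g t ≠ 0 := by
  induction t using Fin.cases with
  | zero => exact absurd rfl ht
  | succ t => rw [cgf_succ]; exact Fin.succ_ne_zero _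

lemma rotpow (j : ℕ) : ∀ i : ℕ, (hi : i ≤ j) →
    ((finRotate (j+1)) ^ i) (0 : Fin (j+1)) = ⟨i, Nat.lt_succ_of_le hi⟩ := by
  intro i
  induction i with
  | zero =>
    intro _
    rfl
  | succ i ih =>
    intro hi
    have e : ((finRotate (j+1)) ^ (i+1)) (0 : Fin (j+1))
        = finRotate (j+1) (((finRotate (j+1)) ^ i) 0) := by
      rw [pow_succ']; rfl
    rw [e, ih (by omega)]
    apply Fin.ext
    rw [finRotate_succ_apply]
    rw [Fin.add_def]
    simp only [Fin.val_one]
    have h1 : (1 : ℕ) % (j+1) = 1 := Nat.mod_eq_of_lt (by omega)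
    rw [show ((1 : Fin (j+1)) : ℕ) = 1 % (j+1) from rfl, h1]
    exact Nat.mod_eq_of_lt (by omega)

lemma rotpow_full (j : ℕ) : ((finRotate (j+1)) ^ (j+1)) (0 : Fin (j+1)) = 0 := by
  have e : ((finRotate (j+1)) ^ (j+1)) (0 : Fin (j+1))
      = finRotate (j+1) (((finRotate (j+1)) ^ j) 0) := by
    rw [pow_succ']; rfl
  rw [e, rotpow j j le_rfl]
  apply Fin.ext
  rw [finRotate_succ_apply, Fin.add_def]
  simp only [Fin.val_zero]
  rw [show ((1 : Fin (j+1)) : ℕ) = 1 % (j+1) from rfl]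
  rcases Nat.eq_zero_or_pos j with hj | hj
  · subst hj
    rfl
  · rw [Nat.mod_eq_of_lt (show 1 < j + 1 by omega), Nat.mod_self]

lemma theta_pow_zero (j : ℕ) (hj : j ≤ n) (g : Fin j ↪ Fin n) (s : Fin (j+1) → ℤˣ)
    (w' : Wr ℤˣ (Fin (n - j))) (i : ℕ) :
    ((Θc j hj g s w').p ^ i) 0 = cgf j g (((finRotate (j+1)) ^ i) 0) := by
  induction i with
  | zero => rfl
  | succ i ih =>
    have e1 : ((Θc j hj g s w').p ^ (i+1)) (0 : Fin (n+1))
        = (Θc j hj g s w').p (((Θc j hj g s w').p ^ i) 0) := by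
      rw [pow_succ']; rfl
    have e2 : ((finRotate (j+1)) ^ (i+1)) (0 : Fin (j+1))
        = finRotate (j+1) (((finRotate (j+1)) ^ i) 0) := by
      rw [pow_succ']; rfl
    rw [e1, e2, ih, cgf_eq_psi_inl j hj, Θc_p_apply]
    rw [Equiv.symm_apply_apply]
    rfl

lemma theta_a_inl (j : ℕ) (hj : j ≤ n) (g : Fin j ↪ Fin n) (s : Fin (j+1) → ℤˣ)
    (w' : Wr ℤˣ (Fin (n - j))) (t : Fin (j+1)) :
    (Θc j hj g s w').a (ψ j hj g (Sum.inl t)) = s t := by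
  rw [Θc_a_apply, Equiv.symm_apply_apply]
  rfl

lemma theta_a_inr (j : ℕ) (hj : j ≤ n) (g : Fin j ↪ Fin n) (s : Fin (j+1) → ℤˣ)
    (w' : Wr ℤˣ (Fin (n - j))) (y : Fin (n - j)) :
    (Θc j hj g s w').a (ψ j hj g (Sum.inr y)) = w'.a y := by
  rw [Θc_a_apply, Equiv.symm_apply_apply]
  rfl

lemma theta_p_inr (j : ℕ) (hj : j ≤ n) (g : Fin j ↪ Fin n) (s : Fin (j+1) → ℤˣ)
    (w' : Wr ℤˣ (Fin (n - j))) (y : Fin (n - j)) :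
    (Θc j hj g s w').p (ψ j hj g (Sum.inr y)) = ψ j hj g (Sum.inr (w'.p y)) := by
  rw [Θc_p_apply, Equiv.symm_apply_apply]
  rfl

abbrev DD (n : ℕ) :=
  Σ j : Fin (n+1), (Fin (j:ℕ) ↪ Fin n) × (Fin ((j:ℕ)+1) → ℤˣ) × Wr ℤˣ (Fin (n - (j:ℕ)))

noncomputable def Θf (n : ℕ) : DD n → Wr ℤˣ (Fin (n+1)) :=
  fun d => Θc (d.1 : ℕ) (Nat.lt_succ_iff.mp d.1.isLt) d.2.1 d.2.2.1 d.2.2.2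

lemma theta_zero_char (j : ℕ) (hj : j ≤ n) (g : Fin j ↪ Fin n) (s : Fin (j+1) → ℤˣ)
    (w' : Wr ℤˣ (Fin (n - j))) :
    (((Θc j hj g s w').p ^ (j+1)) 0 = 0) ∧
    (∀ i : ℕ, 1 ≤ i → i ≤ j → ((Θc j hj g s w').p ^ i) 0 ≠ 0) := by
  constructor
  · rw [theta_pow_zero, rotpow_full]
    rfl
  · intro i h1 h2
    rw [theta_pow_zero, rotpow j i h2]
    apply cgf_ne_zero
    intro hc
    have := congrArg Fin.val hc
    simp only [Fin.val_zero] at this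
    omega

lemma Θf_injective : Function.Injective (Θf n) := by
  rintro ⟨j1, g1, s1, w1⟩ ⟨j2, g2, s2, w2⟩ h
  simp only [Θf] at h
  -- first components equal
  have hjj : ∀ (ja jb : Fin (n+1)) (ga : Fin (ja:ℕ) ↪ Fin n) (sa : Fin ((ja:ℕ)+1) → ℤˣ)
      (wa : Wr ℤˣ (Fin (n - (ja:ℕ)))) (gb : Fin (jb:ℕ) ↪ Fin n) (sb : Fin ((jb:ℕ)+1) → ℤˣ)
      (wb : Wr ℤˣ (Fin (n - (jb:ℕ)))),
      Θc (ja:ℕ) (Nat.lt_succ_iff.mp ja.isLt) ga sa wa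
        = Θc (jb:ℕ) (Nat.lt_succ_iff.mp jb.isLt) gb sb wb → ¬ ((ja:ℕ) < (jb:ℕ)) := by
    intro ja jb ga sa wa gb sb wb heq hlt
    have h1 := (theta_zero_char (ja:ℕ) (Nat.lt_succ_iff.mp ja.isLt) ga sa wa).1
    have h2 := (theta_zero_char (jb:ℕ) (Nat.lt_succ_iff.mp jb.isLt) gb sb wb).2
      ((ja:ℕ)+1) (by omega) (by omega)
    rw [heq] at h1
    exact h2 h1
  have hj12 : j1 = j2 := by
    have a1 := hjj j1 j2 g1 s1 w1 g2 s2 w2 h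
    have a2 := hjj j2 j1 g2 s2 w2 g1 s1 w1 h.symm
    apply Fin.ext
    omega
  subst hj12
  -- g1 = g2
  have hg : g1 = g2 := by
    apply Function.Embedding.ext
    intro i
    have e1 := theta_pow_zero (j1:ℕ) (Nat.lt_succ_iff.mp j1.isLt) g1 s1 w1 ((i:ℕ)+1)
    have e2 := theta_pow_zero (j1:ℕ) (Nat.lt_succ_iff.mp j1.isLt) g2 s2 w2 ((i:ℕ)+1)
    rw [h] at e1
    have e3 := e1.symm.trans e2
    rw [rotpow (j1:ℕ) ((i:ℕ)+1) (by omega)] at e3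
    have hmk : (⟨(i:ℕ)+1, by omega⟩ : Fin ((j1:ℕ)+1)) = Fin.succ i := by
      apply Fin.ext
      rfl
    rw [hmk, cgf_succ, cgf_succ] at e3
    exact Fin.succ_injective _ e3
  subst hg
  -- s1 = s2
  have hs : s1 = s2 := by
    funext t
    have e1 := theta_a_inl (j1:ℕ) (Nat.lt_succ_iff.mp j1.isLt) g1 s1 w1 t
    have e2 := theta_a_inl (j1:ℕ) (Nat.lt_succ_iff.mp j1.isLt) g1 s2 w2 t
    rw [h] at e1
    exact e1.symm.trans e2
  -- w1 = w2
  have hwa : w1.a = w2.a := by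
    funext y
    have e1 := theta_a_inr (j1:ℕ) (Nat.lt_succ_iff.mp j1.isLt) g1 s1 w1 y
    have e2 := theta_a_inr (j1:ℕ) (Nat.lt_succ_iff.mp j1.isLt) g1 s2 w2 y
    rw [h] at e1
    exact e1.symm.trans e2
  have hwp : w1.p = w2.p := by
    apply Equiv.ext
    intro y
    have e1 := theta_p_inr (j1:ℕ) (Nat.lt_succ_iff.mp j1.isLt) g1 s1 w1 y
    have e2 := theta_p_inr (j1:ℕ) (Nat.lt_succ_iff.mp j1.isLt) g1 s2 w2 y
    rw [h] at e1
    have e3 := e1.symm.trans e2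
    exact Sum.inr.inj ((ψ (j1:ℕ) (Nat.lt_succ_iff.mp j1.isLt) g1).injective e3)
  have hw : w1 = w2 := Wr.ext hwa hwp
  subst hs
  subst hw
  rfl

lemma card_Wr (m : ℕ) : Fintype.card (Wr ℤˣ (Fin m)) = 2^m * m.factorial := by
  have e : Wr ℤˣ (Fin m) ≃ ((Fin m → ℤˣ) × Equiv.Perm (Fin m)) :=
    { toFun := fun w => (w.a, w.p)
      invFun := fun p => ⟨p.1, p.2⟩
      left_inv := fun _ => rfl
      right_inv := fun _ => rfl }
  rw [Fintype.card_congr e, Fintype.card_prod, Fintype.card_fun, Fintype.card_perm]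
  simp

lemma card_DD : Fintype.card (DD n) = 2^(n+1) * (n+1).factorial := by
  have e0 : DD n ≃ Σ j : Fin (n+1),
      (Fin (j:ℕ) ↪ Fin n) × (Fin ((j:ℕ)+1) → ℤˣ) × Wr ℤˣ (Fin (n - (j:ℕ))) := Equiv.refl _
  rw [Fintype.card_congr e0, Fintype.card_sigma]
  have hterms : ∀ j : Fin (n+1), Fintype.card
      ((Fin (j:ℕ) ↪ Fin n) × (Fin ((j:ℕ)+1) → ℤˣ) × Wr ℤˣ (Fin (n - (j:ℕ))))
      = (n.descFactorial (j:ℕ)) * (2^((j:ℕ)+1) * (2^(n-(j:ℕ)) * (n-(j:ℕ)).factorial)) := by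
    intro j
    rw [Fintype.card_prod, Fintype.card_prod, Fintype.card_embedding_eq, Fintype.card_fun,
      card_Wr]
    simp
  rw [Finset.sum_congr rfl (fun j _ => hterms j)]
  · rw [Fin.sum_univ_eq_sum_range
      (fun j => (n.descFactorial j) * (2^(j+1) * (2^(n-j) * (n-j).factorial)))]
    have hterm : ∀ j ∈ Finset.range (n+1),
        (n.descFactorial j) * (2^(j+1) * (2^(n-j) * (n-j).factorial)) = 2^(n+1) * n.factorial := by
      intro j hj
      rw [Finset.mem_range] at hj
      have h1 : (2:ℕ)^(j+1) * 2^(n-j) = 2^(n+1) := by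
        rw [← pow_add]
        congr 1
        omega
      have h2 : n.descFactorial j * (n-j).factorial = n.factorial := by
        rw [mul_comm]
        exact Nat.factorial_mul_descFactorial (by omega)
      calc (n.descFactorial j) * (2^(j+1) * (2^(n-j) * (n-j).factorial))
          = (2^(j+1) * 2^(n-j)) * (n.descFactorial j * (n-j).factorial) := by ring
        _ = 2^(n+1) * n.factorial := by rw [h1, h2]
    rw [Finset.sum_congr rfl hterm, Finset.sum_const, Finset.card_range]
    rw [Nat.factorial_succ]
    ring

lemma Θf_bijective : Function.Bijective (Θf n) := by
  rw [Fintype.bijective_iff_injective_and_card]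
  exact ⟨Θf_injective, by rw [card_DD, card_Wr]⟩

lemma peel (f : Wr ℤˣ (Fin (n+1)) → ℂ) :
    ∑ w : Wr ℤˣ (Fin (n+1)), f w = ∑ d : DD n, f (Θf n d) :=
  (Fintype.sum_bijective (Θf n) Θf_bijective _ f (fun _ => rfl)).symm

end Peel

noncomputable def pw (F : ℕ → ℂ) {k : ℕ} (p : k.Partition) : ℂ :=
  ∏ i ∈ p.parts.toFinset,
    F i ^ p.parts.count i / (((2 * i) ^ p.parts.count i * (p.parts.count i).factorial : ℕ) : ℂ)

def consP {m : ℕ} (i : ℕ) (hi : 0 < i) (p : Nat.Partition m) (N : ℕ) (h : i + m = N) :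
    Nat.Partition N where
  parts := i ::ₘ p.parts
  parts_pos := by
    intro j hj
    rcases Multiset.mem_cons.mp hj with h' | h'
    · exact h' ▸ hi
    · exact p.parts_pos h'
  parts_sum := by rw [Multiset.sum_cons, p.parts_sum, h]

lemma pw_cons (F : ℕ → ℂ) {m : ℕ} (i : ℕ) (hi : 0 < i) (p : Nat.Partition m) (N : ℕ)
    (h : i + m = N) :
    pw F (consP i hi p N h) =
      pw F p * F i / (((2 * i) * (p.parts.count i + 1) : ℕ) : ℂ) := by
  classical
  set c := p.parts.count i with hc
  have hcount_i : (i ::ₘ p.parts).count i = c + 1 := by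
    rw [Multiset.count_cons]; simp [hc]
  have hcount_ne : ∀ i', i' ≠ i → (i ::ₘ p.parts).count i' = p.parts.count i' := by
    intro i' hne
    rw [Multiset.count_cons]; simp [hne]
  have hD1 : ((((2 * i) ^ c * c.factorial : ℕ) : ℂ)) ≠ 0 := by
    have : 0 < (2 * i) ^ c * c.factorial := by positivity
    exact_mod_cast this.ne'
  have hD2 : ((((2 * i) * (c + 1) : ℕ) : ℂ)) ≠ 0 := by
    have : 0 < (2 * i) * (c + 1) := by positivity
    exact_mod_cast this.ne'
  have hfac : F i ^ (c+1) / ((((2 * i) ^ (c+1) * (c+1).factorial : ℕ) : ℂ))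
      = (F i ^ c / (((2 * i) ^ c * c.factorial : ℕ) : ℂ)) * F i / (((2 * i) * (c + 1) : ℕ) : ℂ) := by
    rw [pow_succ]
    push_cast
    rw [Nat.factorial_succ]
    push_cast
    field_simp
    ring
  unfold pw
  simp only [consP]
  by_cases hmem : i ∈ p.parts.toFinset
  · have htf : (i ::ₘ p.parts).toFinset = p.parts.toFinset := by
      rw [Multiset.toFinset_cons, Finset.insert_eq_self.mpr hmem]
    rw [htf]
    rw [← Finset.mul_prod_erase _ _ hmem, ← Finset.mul_prod_erase _ _ hmem]
    have hrest : ∏ i' ∈ p.parts.toFinset.erase i,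
        F i' ^ (i ::ₘ p.parts).count i' / ((((2 * i') ^ (i ::ₘ p.parts).count i' * ((i ::ₘ p.parts).count i').factorial : ℕ) : ℂ))
        = ∏ i' ∈ p.parts.toFinset.erase i,
        F i' ^ p.parts.count i' / ((((2 * i') ^ p.parts.count i' * (p.parts.count i').factorial : ℕ) : ℂ)) := by
      apply Finset.prod_congr rfl
      intro i' hi'
      rw [hcount_ne i' (Finset.ne_of_mem_erase hi')]
    rw [hrest, hcount_i, hfac]
    ring
  · have hc0 : c = 0 := by
      rw [hc, Multiset.count_eq_zero]
      intro hmem'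
      exact hmem (Multiset.mem_toFinset.mpr hmem')
    have htf : (i ::ₘ p.parts).toFinset = insert i p.parts.toFinset := Multiset.toFinset_cons _ _
    rw [htf, Finset.prod_insert hmem]
    have hrest : ∏ i' ∈ p.parts.toFinset,
        F i' ^ (i ::ₘ p.parts).count i' / ((((2 * i') ^ (i ::ₘ p.parts).count i' * ((i ::ₘ p.parts).count i').factorial : ℕ) : ℂ))
        = ∏ i' ∈ p.parts.toFinset,
        F i' ^ p.parts.count i' / ((((2 * i') ^ p.parts.count i' * (p.parts.count i').factorial : ℕ) : ℂ)) := by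
      apply Finset.prod_congr rfl
      intro i' hi'
      have : i' ≠ i := by rintro rfl; exact hmem hi'
      rw [hcount_ne i' this]
    rw [hrest, hcount_i, hc0]
    simp only [zero_add, pow_one, Nat.factorial_one, mul_one]
    ring

def eraseP {m : ℕ} (p : Nat.Partition m) (i : ℕ) (h : i ∈ p.parts) (N : ℕ) (hN : m - i = N) :
    Nat.Partition N where
  parts := p.parts.erase i
  parts_pos := fun hj => p.parts_pos (Multiset.mem_of_mem_erase hj)
  parts_sum := by
    have h2 := p.parts_sum
    rw [← Multiset.cons_erase h, Multiset.sum_cons] at h2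
    omega

lemma msum_eq (s : Multiset ℕ) : s.sum = ∑ a ∈ s.toFinset, s.count a * a := by
  have := Finset.sum_multiset_map_count s (id : ℕ → ℕ)
  simpa using this

lemma le_of_mem_parts {m : ℕ} (p : Nat.Partition m) {i : ℕ} (h : i ∈ p.parts) : i ≤ m := by
  rw [← p.parts_sum]
  exact Multiset.single_le_sum (fun x _ => Nat.zero_le x) i h

lemma ins (F : ℕ → ℂ) (k : ℕ) :
    ∑ j ∈ Finset.range k, F (j+1) * ∑ p : Nat.Partition (k - 1 - j), pw F p
      = (2 * (k:ℂ)) * ∑ p : Nat.Partition k, pw F p := by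
  classical
  have hRHS : (2 * (k:ℂ)) * ∑ p : Nat.Partition k, pw F p
      = ∑ p : Nat.Partition k, ∑ i ∈ p.parts.toFinset,
          ((2 * (p.parts.count i * i) : ℕ) : ℂ) * pw F p := by
    rw [Finset.mul_sum]
    apply Finset.sum_congr rfl
    intro p _
    rw [← Finset.sum_mul]
    congr 1
    have : (k : ℂ) = ((p.parts.sum : ℕ) : ℂ) := by rw [p.parts_sum]
    rw [this, msum_eq]
    push_cast
    rw [Finset.mul_sum]
  have hLHS : ∑ j ∈ Finset.range k, F (j+1) * ∑ p : Nat.Partition (k - 1 - j), pw F p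
      = ∑ j ∈ Finset.range k, ∑ p ∈ (Finset.univ : Finset (Nat.Partition (k - 1 - j))),
          F (j+1) * pw F p := by
    apply Finset.sum_congr rfl
    intro j _
    rw [Finset.mul_sum]
  rw [hLHS, hRHS]
  rw [Finset.sum_sigma' (Finset.range k) _ (fun j p => F (j+1) * pw F p)]
  rw [Finset.sum_sigma' (Finset.univ : Finset (Nat.Partition k)) _
    (fun p i => ((2 * (p.parts.count i * i) : ℕ) : ℂ) * pw F p)]
  refine Finset.sum_bij' (fun a ha => ⟨consP (a.1 + 1) (Nat.succ_pos _) a.2 k ?_, a.1 + 1⟩)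
    (fun b hb => ⟨b.2 - 1, eraseP b.1 b.2 ?_ (k - 1 - (b.2 - 1)) ?_⟩) ?_ ?_ ?_ ?_ ?_
  · -- consP side condition : (a.1+1) + (k - 1 - a.1) = k
    have := Finset.mem_sigma.mp ha
    have hj : a.1 ∈ Finset.range k := this.1
    rw [Finset.mem_range] at hj
    omega
  · -- eraseP membership
    have := Finset.mem_sigma.mp hb
    exact Multiset.mem_toFinset.mp this.2
  · -- eraseP arithmetic : k - b.2 = k - 1 - (b.2 - 1)
    have := Finset.mem_sigma.mp hb
    have h1 : b.2 ∈ b.1.parts := Multiset.mem_toFinset.mp this.2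
    have h2 : 0 < b.2 := b.1.parts_pos h1
    omega
  · -- hi : forward lands in target
    intro a ha
    rw [Finset.mem_sigma]
    constructor
    · exact Finset.mem_univ _
    · simp only [consP]
      rw [Multiset.toFinset_cons]
      exact Finset.mem_insert_self _ _
  · -- hj : backward lands in source
    intro b hb
    have hmem := Finset.mem_sigma.mp hb
    have h1 : b.2 ∈ b.1.parts := Multiset.mem_toFinset.mp hmem.2
    have h2 : 0 < b.2 := b.1.parts_pos h1
    have h3 : b.2 ≤ k := le_of_mem_parts b.1 h1
    rw [Finset.mem_sigma]
    refine ⟨Finset.mem_range.mpr ?_, Finset.mem_univ _⟩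
    show b.2 - 1 < k
    omega
  · -- left inverse
    intro a ha
    refine Sigma.ext rfl (heq_of_eq ?_)
    apply Nat.Partition.ext
    simp only [eraseP, consP]
    exact Multiset.erase_cons_head _ _
  · -- right inverse
    intro b hb
    have hmem := Finset.mem_sigma.mp hb
    have h1 : b.2 ∈ b.1.parts := Multiset.mem_toFinset.mp hmem.2
    have h2 : 0 < b.2 := b.1.parts_pos h1
    refine Sigma.ext ?_ (heq_of_eq ?_)
    · apply Nat.Partition.ext
      simp only [consP, eraseP]
      rw [show b.2 - 1 + 1 = b.2 by omega]
      exact Multiset.cons_erase h1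
    · simp only
      omega
  · -- summand equality
    intro a ha
    have hmem := Finset.mem_sigma.mp ha
    have hj : a.1 < k := Finset.mem_range.mp hmem.1
    simp only
    rw [pw_cons]
    have hcount : (consP (a.1 + 1) (Nat.succ_pos _) a.2 k (by omega)).parts.count (a.1 + 1)
        = a.2.parts.count (a.1 + 1) + 1 := by
      simp only [consP]
      rw [Multiset.count_cons]
      simp
    rw [hcount]
    have hne : (((2 * (a.1+1) * (a.2.parts.count (a.1+1) + 1) : ℕ)) : ℂ) ≠ 0 := by
      have : 0 < 2 * (a.1+1) * (a.2.parts.count (a.1+1) + 1) := by positivity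
      exact_mod_cast this.ne'
    have e : ((2 * ((a.2.parts.count (a.1+1) + 1) * (a.1+1)) : ℕ) : ℂ)
        = ((2 * (a.1+1) * (a.2.parts.count (a.1+1) + 1) : ℕ) : ℂ) := by
      push_cast
      ring
    rw [e, mul_comm (((2 * (a.1+1) * (a.2.parts.count (a.1+1) + 1) : ℕ)) : ℂ),
      div_mul_cancel₀ _ hne]
    ring

noncomputable def Sig (u v : ℕ → ℂ) (n : ℕ) : ℂ :=
  ∑ k ∈ Finset.range (n+1), ∑ p : Nat.Partition k, ∑ q : Nat.Partition (n - k), pw u p * pw v q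

lemma sig_rec (u v : ℕ → ℂ) (n : ℕ) :
    ∑ j ∈ Finset.range (n+1), (u (j+1) + v (j+1)) * Sig u v (n - j)
      = 2 * ((n:ℂ)+1) * Sig u v (n+1) := by
  classical
  have hsplit : ∑ j ∈ Finset.range (n+1), (u (j+1) + v (j+1)) * Sig u v (n - j)
      = (∑ j ∈ Finset.range (n+1), u (j+1) * Sig u v (n - j))
        + ∑ j ∈ Finset.range (n+1), v (j+1) * Sig u v (n - j) := by
    rw [← Finset.sum_add_distrib]
    exact Finset.sum_congr rfl (fun j _ => by ring)
  rw [hsplit]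
  have hA : (∑ j ∈ Finset.range (n+1), u (j+1) * Sig u v (n - j))
      = ∑ k ∈ Finset.range (n+2), (2 * (k:ℂ)) *
          ((∑ p : Nat.Partition k, pw u p) * (∑ q : Nat.Partition (n+1-k), pw v q)) := by
    have hd : (∑ j ∈ Finset.range (n+1), u (j+1) * Sig u v (n - j))
        = ∑ j ∈ Finset.range (n+1), ∑ k' ∈ Finset.range (n - j + 1),
            (fun j k' => u (j+1) * ∑ p : Nat.Partition k',
              ∑ q : Nat.Partition (n - j - k'), pw u p * pw v q) j k' := by
      apply Finset.sum_congr rfl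
      intro j _
      simp only [Sig]
      rw [Finset.mul_sum]
    rw [hd, Finset.sum_sigma' (Finset.range (n+1)) (fun j => Finset.range (n - j + 1))
      (fun j k' => u (j+1) * ∑ p : Nat.Partition k',
        ∑ q : Nat.Partition (n - j - k'), pw u p * pw v q)]
    have h2 : ∑ x ∈ (Finset.range (n+1)).sigma (fun j => Finset.range (n - j + 1)),
            (fun j k' => u (j+1) * ∑ p : Nat.Partition k',
              ∑ q : Nat.Partition (n - j - k'), pw u p * pw v q) x.1 x.2
        = ∑ x ∈ (Finset.range (n+2)).sigma (fun k => Finset.range k),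
            (fun k j => u (j+1) * ∑ p : Nat.Partition (k - 1 - j),
              ∑ q : Nat.Partition (n + 1 - k), pw u p * pw v q) x.1 x.2 := by
      refine Finset.sum_bij' (fun a _ => ⟨a.1 + a.2 + 1, a.1⟩) (fun b _ => ⟨b.2, b.1 - 1 - b.2⟩)
        ?_ ?_ ?_ ?_ ?_
      · intro a ha
        simp only [Finset.mem_sigma, Finset.mem_range] at ha ⊢
        omega
      · intro b hb
        simp only [Finset.mem_sigma, Finset.mem_range] at hb ⊢
        omega
      · intro a ha
        simp only [Finset.mem_sigma, Finset.mem_range] at ha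
        show (⟨a.1, a.1 + a.2 + 1 - 1 - a.1⟩ : (_ : ℕ) × ℕ) = a
        exact Sigma.ext rfl (heq_of_eq (show a.1 + a.2 + 1 - 1 - a.1 = a.2 by omega))
      · intro b hb
        simp only [Finset.mem_sigma, Finset.mem_range] at hb
        show (⟨b.2 + (b.1 - 1 - b.2) + 1, b.2⟩ : (_ : ℕ) × ℕ) = b
        exact Sigma.ext (show b.2 + (b.1 - 1 - b.2) + 1 = b.1 by omega) (heq_of_eq rfl)
      · intro a ha
        simp only [Finset.mem_sigma, Finset.mem_range] at ha
        simp only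
        rw [show a.1 + a.2 + 1 - 1 - a.1 = a.2 by omega,
          show n + 1 - (a.1 + a.2 + 1) = n - a.1 - a.2 by omega]
    rw [h2, ← Finset.sum_sigma' (Finset.range (n+2)) (fun k => Finset.range k)
      (fun k j => u (j+1) * ∑ p : Nat.Partition (k - 1 - j),
        ∑ q : Nat.Partition (n + 1 - k), pw u p * pw v q)]
    apply Finset.sum_congr rfl
    intro k _
    have hinner : ∀ j, (∑ p : Nat.Partition (k - 1 - j),
        ∑ q : Nat.Partition (n + 1 - k), pw u p * pw v q)
        = (∑ p : Nat.Partition (k - 1 - j), pw u p) * ∑ q : Nat.Partition (n+1-k), pw v q := by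
      intro j
      rw [Finset.sum_mul_sum]
    calc ∑ j ∈ Finset.range k, u (j+1) * ∑ p : Nat.Partition (k - 1 - j),
            ∑ q : Nat.Partition (n + 1 - k), pw u p * pw v q
        = (∑ j ∈ Finset.range k, u (j+1) * ∑ p : Nat.Partition (k - 1 - j), pw u p) *
            ∑ q : Nat.Partition (n+1-k), pw v q := by
          rw [Finset.sum_mul]
          exact Finset.sum_congr rfl (fun j _ => by rw [hinner j]; ring)
      _ = (2 * (k:ℂ)) * ((∑ p : Nat.Partition k, pw u p) * ∑ q : Nat.Partition (n+1-k), pw v q) := by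
          rw [ins u k]; ring
  have hB : (∑ j ∈ Finset.range (n+1), v (j+1) * Sig u v (n - j))
      = ∑ k ∈ Finset.range (n+2), (2 * (((n+1-k : ℕ)):ℂ)) *
          ((∑ p : Nat.Partition k, pw u p) * (∑ q : Nat.Partition (n+1-k), pw v q)) := by
    have hd : (∑ j ∈ Finset.range (n+1), v (j+1) * Sig u v (n - j))
        = ∑ j ∈ Finset.range (n+1), ∑ k' ∈ Finset.range (n - j + 1),
            (fun j k' => v (j+1) * ∑ p : Nat.Partition k',
              ∑ q : Nat.Partition (n - j - k'), pw u p * pw v q) j k' := by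
      apply Finset.sum_congr rfl
      intro j _
      simp only [Sig]
      rw [Finset.mul_sum]
    rw [hd, Finset.sum_sigma' (Finset.range (n+1)) (fun j => Finset.range (n - j + 1))
      (fun j k' => v (j+1) * ∑ p : Nat.Partition k',
        ∑ q : Nat.Partition (n - j - k'), pw u p * pw v q)]
    have h2 : ∑ x ∈ (Finset.range (n+1)).sigma (fun j => Finset.range (n - j + 1)),
            (fun j k' => v (j+1) * ∑ p : Nat.Partition k',
              ∑ q : Nat.Partition (n - j - k'), pw u p * pw v q) x.1 x.2
        = ∑ x ∈ (Finset.range (n+2)).sigma (fun k => Finset.range (n + 1 - k)),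
            (fun k j => v (j+1) * ∑ p : Nat.Partition k,
              ∑ q : Nat.Partition (n + 1 - k - 1 - j), pw u p * pw v q) x.1 x.2 := by
      refine Finset.sum_bij' (fun a _ => ⟨a.2, a.1⟩) (fun b _ => ⟨b.2, b.1⟩)
        ?_ ?_ ?_ ?_ ?_
      · intro a ha
        simp only [Finset.mem_sigma, Finset.mem_range] at ha ⊢
        omega
      · intro b hb
        simp only [Finset.mem_sigma, Finset.mem_range] at hb ⊢
        omega
      · intro a ha
        show (⟨a.1, a.2⟩ : (_ : ℕ) × ℕ) = a
        rfl
      · intro b hb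
        show (⟨b.1, b.2⟩ : (_ : ℕ) × ℕ) = b
        rfl
      · intro a ha
        simp only [Finset.mem_sigma, Finset.mem_range] at ha
        simp only
        rw [show n + 1 - a.2 - 1 - a.1 = n - a.1 - a.2 by omega]
    rw [h2, ← Finset.sum_sigma' (Finset.range (n+2)) (fun k => Finset.range (n + 1 - k))
      (fun k j => v (j+1) * ∑ p : Nat.Partition k,
        ∑ q : Nat.Partition (n + 1 - k - 1 - j), pw u p * pw v q)]
    apply Finset.sum_congr rfl
    intro k _
    have hinner : ∀ j, (∑ p : Nat.Partition k,
        ∑ q : Nat.Partition (n + 1 - k - 1 - j), pw u p * pw v q)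
        = (∑ q : Nat.Partition (n + 1 - k - 1 - j), pw v q) * ∑ p : Nat.Partition k, pw u p := by
      intro j
      rw [Finset.sum_mul_sum]
      rw [Finset.sum_comm]
      apply Finset.sum_congr rfl
      intro q _
      exact Finset.sum_congr rfl (fun p _ => by ring)
    calc ∑ j ∈ Finset.range (n + 1 - k), v (j+1) * ∑ p : Nat.Partition k,
            ∑ q : Nat.Partition (n + 1 - k - 1 - j), pw u p * pw v q
        = (∑ j ∈ Finset.range (n + 1 - k), v (j+1) *
            ∑ q : Nat.Partition (n + 1 - k - 1 - j), pw v q) * ∑ p : Nat.Partition k, pw u p := by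
          rw [Finset.sum_mul]
          exact Finset.sum_congr rfl (fun j _ => by rw [hinner j]; ring)
      _ = (2 * (((n+1-k : ℕ)):ℂ)) * ((∑ p : Nat.Partition k, pw u p) *
            ∑ q : Nat.Partition (n+1-k), pw v q) := by
          rw [ins v (n+1-k)]; ring
  rw [hA, hB, ← Finset.sum_add_distrib]
  have hS : Sig u v (n+1) = ∑ k ∈ Finset.range (n+2),
      (∑ p : Nat.Partition k, pw u p) * (∑ q : Nat.Partition (n+1-k), pw v q) := by
    simp only [Sig]
    exact Finset.sum_congr rfl (fun k _ => by rw [Finset.sum_mul_sum])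
  rw [hS, Finset.mul_sum]
  apply Finset.sum_congr rfl
  intro k hk
  have hk' : k ≤ n + 1 := by
    rw [Finset.mem_range] at hk; omega
  have hcast : (((n+1-k : ℕ)):ℂ) = (n:ℂ) + 1 - (k:ℂ) := by
    push_cast [Nat.cast_sub hk']
    ring
  rw [hcast]
  ring


section Main

noncomputable def TT (r : ℕ) (x : ℂ) (n : ℕ) : ℂ :=
  ∑ w : Wr ℤˣ (Fin n), ((1 + x • Aw w).det) ^ r

lemma pw_zero (F : ℕ → ℂ) (p : Nat.Partition 0) : pw F p = 1 := by
  unfold pw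
  rw [Nat.Partition.partition_zero_parts p]
  rfl

lemma Sig_zero (u v : ℕ → ℂ) : Sig u v 0 = 1 := by
  unfold Sig
  rw [Finset.sum_range_one]
  simp [pw_zero]

lemma TT_zero (r : ℕ) (x : ℂ) : TT r x 0 = 1 := by
  unfold TT
  have h : ∀ w : Wr ℤˣ (Fin 0), ((1 + x • Aw w).det) ^ r = 1 := by
    intro w
    rw [Matrix.det_fin_zero, one_pow]
  rw [Finset.sum_congr rfl (fun w _ => h w), Finset.sum_const, Finset.card_univ, card_Wr]
  simp

lemma main_rec (r : ℕ) (x : ℂ) (n : ℕ) :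
    TT r x (n+1) = ∑ j ∈ Finset.range (n+1),
      ((n.descFactorial j : ℕ) : ℂ) * 2^j *
        (((1 - (-x)^(j+1))^r + (1 + (-x)^(j+1))^r)) * TT r x (n - j) := by
  unfold TT
  rw [peel (fun w => ((1 + x • Aw w).det) ^ r)]
  rw [← Finset.univ_sigma_univ]
  rw [Finset.sum_sigma Finset.univ (fun _ => Finset.univ)
    (fun d => ((1 + x • Aw (Θf n d)).det) ^ r)]
  rw [← Fin.sum_univ_eq_sum_range (fun j => ((n.descFactorial j : ℕ) : ℂ) * 2^j *
        (((1 - (-x)^(j+1))^r + (1 + (-x)^(j+1))^r)) *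
          ∑ w : Wr ℤˣ (Fin (n - j)), ((1 + x • Aw w).det) ^ r)]
  apply Finset.sum_congr rfl
  intro j _
  have hstep : ∀ y : (Fin (j:ℕ) ↪ Fin n) × (Fin ((j:ℕ)+1) → ℤˣ) × Wr ℤˣ (Fin (n - (j:ℕ))),
      ((1 + x • Aw (Θf n ⟨j, y⟩)).det) ^ r
        = (1 - (((∏ i, y.2.1 i : ℤˣ) : ℤ) : ℂ) * (-x)^((j:ℕ)+1))^r *
            ((1 + x • Aw y.2.2).det) ^ r := by
    intro y
    rw [show Θf n ⟨j, y⟩ = Θc (j:ℕ) (Nat.lt_succ_iff.mp j.isLt) y.1 y.2.1 y.2.2 from rfl]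
    rw [det_Θc, mul_pow]
  rw [Finset.sum_congr rfl (fun y _ => hstep y)]
  rw [Fintype.sum_prod_type]
  -- inner: over s × w'
  have hinner : ∀ g : Fin (j:ℕ) ↪ Fin n,
      ∑ y : (Fin ((j:ℕ)+1) → ℤˣ) × Wr ℤˣ (Fin (n - (j:ℕ))),
        (1 - (((∏ i, y.1 i : ℤˣ) : ℤ) : ℂ) * (-x)^((j:ℕ)+1))^r * ((1 + x • Aw y.2).det) ^ r
      = 2^(j:ℕ) * (((1 - (-x)^((j:ℕ)+1))^r + (1 + (-x)^((j:ℕ)+1))^r)) *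
          ∑ w : Wr ℤˣ (Fin (n - (j:ℕ))), ((1 + x • Aw w).det) ^ r := by
    intro g
    rw [Fintype.sum_prod_type]
    have h1 : ∀ s : Fin ((j:ℕ)+1) → ℤˣ,
        ∑ w' : Wr ℤˣ (Fin (n - (j:ℕ))),
          (1 - (((∏ i, s i : ℤˣ) : ℤ) : ℂ) * (-x)^((j:ℕ)+1))^r * ((1 + x • Aw w').det) ^ r
        = (1 - (((∏ i, s i : ℤˣ) : ℤ) : ℂ) * (-x)^((j:ℕ)+1))^r *
            ∑ w' : Wr ℤˣ (Fin (n - (j:ℕ))), ((1 + x • Aw w').det) ^ r := by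
      intro s
      rw [Finset.mul_sum]
    rw [Finset.sum_congr rfl (fun s _ => h1 s)]
    rw [← Finset.sum_mul]
    congr 1
    rw [prodSign_sum (j:ℕ) (fun ε => (1 - ((ε : ℤ) : ℂ) * (-x)^((j:ℕ)+1))^r)]
    norm_num
  rw [Finset.sum_congr rfl (fun g _ => hinner g)]
  rw [Finset.sum_const, Finset.card_univ, Fintype.card_embedding_eq]
  simp only [Fintype.card_fin]
  rw [nsmul_eq_mul]
  ring

lemma main_eq (r : ℕ) (x : ℂ) : ∀ n : ℕ,
    TT r x n = ((2^n * n.factorial : ℕ) : ℂ) *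
      Sig (fun i => (1 - (-x)^i)^r) (fun i => (1 + (-x)^i)^r) n := by
  intro n
  induction n using Nat.strong_induction_on with
  | _ n ih =>
    match n with
    | 0 =>
      rw [TT_zero, Sig_zero]
      norm_num
    | (n+1) =>
      rw [main_rec]
      have hterm : ∀ j ∈ Finset.range (n+1),
          ((n.descFactorial j : ℕ) : ℂ) * 2^j *
            (((1 - (-x)^(j+1))^r + (1 + (-x)^(j+1))^r)) * TT r x (n - j)
          = ((2^n * n.factorial : ℕ) : ℂ) *
              ((((1 - (-x)^(j+1))^r + (1 + (-x)^(j+1))^r)) *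
                Sig (fun i => (1 - (-x)^i)^r) (fun i => (1 + (-x)^i)^r) (n - j)) := by
        intro j hj
        rw [Finset.mem_range] at hj
        rw [ih (n - j) (by omega)]
        have hd : ((n.descFactorial j : ℕ) : ℂ) * 2^j * ((2^(n-j) * (n-j).factorial : ℕ) : ℂ)
            = ((2^n * n.factorial : ℕ) : ℂ) := by
          push_cast
          rw [← mul_assoc]
          rw [show ((n.descFactorial j : ℕ) : ℂ) * 2^j * 2^(n-j)
            = ((n.descFactorial j : ℕ) : ℂ) * (2^j * 2^(n-j)) by ring]
          rw [← pow_add]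
          rw [show j + (n - j) = n by omega]
          have : ((n.descFactorial j : ℕ) : ℂ) * ((n-j).factorial : ℂ)
              = ((n.factorial : ℕ) : ℂ) := by
            rw [← Nat.cast_mul]
            congr 1
            rw [mul_comm]
            exact Nat.factorial_mul_descFactorial (by omega)
          calc ((n.descFactorial j : ℕ) : ℂ) * 2^n * (((n-j).factorial : ℕ) : ℂ)
              = (((n.descFactorial j : ℕ) : ℂ) * (((n-j).factorial : ℕ) : ℂ)) * 2^n := by ring
            _ = ((n.factorial : ℕ) : ℂ) * 2^n := by rw [this]
            _ = 2^n * ((n.factorial : ℕ) : ℂ) := by ring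
        calc ((n.descFactorial j : ℕ) : ℂ) * 2^j *
            (((1 - (-x)^(j+1))^r + (1 + (-x)^(j+1))^r)) *
              (((2^(n-j) * (n-j).factorial : ℕ) : ℂ) *
                Sig (fun i => (1 - (-x)^i)^r) (fun i => (1 + (-x)^i)^r) (n - j))
            = (((n.descFactorial j : ℕ) : ℂ) * 2^j * ((2^(n-j) * (n-j).factorial : ℕ) : ℂ)) *
              ((((1 - (-x)^(j+1))^r + (1 + (-x)^(j+1))^r)) *
                Sig (fun i => (1 - (-x)^i)^r) (fun i => (1 + (-x)^i)^r) (n - j)) := by ring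
          _ = _ := by rw [hd]
      rw [Finset.sum_congr rfl hterm, ← Finset.mul_sum]
      rw [sig_rec (fun i => (1 - (-x)^i)^r) (fun i => (1 + (-x)^i)^r) n]
      push_cast [Nat.factorial_succ]
      ring

end Main


section Final

lemma pw_ext (F : ℕ → ℂ) {k : ℕ} (p : Nat.Partition k) (n : ℕ) (hk : k ≤ n) :
    pw F p = (∏ i ∈ Finset.Icc 1 n, F i ^ p.parts.count i) /
      ((∏ i ∈ Finset.Icc 1 n,
        (2*i)^(p.parts.count i) * (p.parts.count i).factorial : ℕ) : ℂ) := by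
  have hsub : p.parts.toFinset ⊆ Finset.Icc 1 n := by
    intro i hi
    rw [Multiset.mem_toFinset] at hi
    rw [Finset.mem_Icc]
    exact ⟨p.parts_pos hi, le_trans (le_of_mem_parts p hi) hk⟩
  have hcount0 : ∀ i ∈ Finset.Icc 1 n, i ∉ p.parts.toFinset → p.parts.count i = 0 := by
    intro i _ hi
    rw [Multiset.count_eq_zero]
    intro hmem
    exact hi (Multiset.mem_toFinset.mpr hmem)
  unfold pw
  rw [Finset.prod_div_distrib]
  congr 1
  · apply Finset.prod_subset hsub
    intro i hi1 hi2
    rw [hcount0 i hi1 hi2, pow_zero]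
  · rw [Nat.cast_prod]
    apply Finset.prod_subset hsub
    intro i hi1 hi2
    rw [hcount0 i hi1 hi2]
    simp

lemma Sig_eq_statement (r n : ℕ) (x : ℂ) :
    Sig (fun i => (1 - (-x)^i)^r) (fun i => (1 + (-x)^i)^r) n
    = ∑ k ∈ Finset.range (n + 1), ∑ p : Nat.Partition k, ∑ q : Nat.Partition (n - k),
        ((∏ i ∈ Finset.Icc 1 n, (1 - (-x) ^ i) ^ (p.parts.count i * r)) *
            ∏ j ∈ Finset.Icc 1 n, (1 + (-x) ^ j) ^ (q.parts.count j * r)) /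
          ((∏ i ∈ Finset.Icc 1 n,
            (2 * i) ^ (p.parts.count i) * (p.parts.count i).factorial *
              ((2 * i) ^ (q.parts.count i) * (q.parts.count i).factorial) : ℕ) : ℂ) := by
  unfold Sig
  apply Finset.sum_congr rfl
  intro k hk
  rw [Finset.mem_range] at hk
  apply Finset.sum_congr rfl
  intro p _
  apply Finset.sum_congr rfl
  intro q _
  rw [pw_ext (fun i => (1 - (-x)^i)^r) p n (by omega),
    pw_ext (fun i => (1 + (-x)^i)^r) q n (by omega)]
  rw [div_mul_div_comm, ← Nat.cast_mul]
  congr 1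
  · congr 1
    · apply Finset.prod_congr rfl
      intro i _
      rw [← pow_mul, Nat.mul_comm r (Multiset.count i p.parts)]
    · apply Finset.prod_congr rfl
      intro i _
      rw [← pow_mul, Nat.mul_comm r (Multiset.count i q.parts)]
  · congr 1
    exact Finset.prod_mul_distrib.symm

lemma final_result (n r : ℕ) (x : ℂ) :
    (1 / ((2 ^ n * n.factorial : ℕ) : ℂ)) *
        ∑ w : Wr ℤˣ (Fin n), ((1 + x • Aw w).det) ^ r =
      ∑ k ∈ Finset.range (n + 1), ∑ p : Nat.Partition k, ∑ q : Nat.Partition (n - k),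
        ((∏ i ∈ Finset.Icc 1 n, (1 - (-x) ^ i) ^ (p.parts.count i * r)) *
            ∏ j ∈ Finset.Icc 1 n, (1 + (-x) ^ j) ^ (q.parts.count j * r)) /
          ((∏ i ∈ Finset.Icc 1 n,
            (2 * i) ^ (p.parts.count i) * (p.parts.count i).factorial *
              ((2 * i) ^ (q.parts.count i) * (q.parts.count i).factorial) : ℕ) : ℂ) := by
  have hm := main_eq r x n
  rw [show (∑ w : Wr ℤˣ (Fin n), ((1 + x • Aw w).det) ^ r) = TT r x n from rfl, hm,
    ← Sig_eq_statement r n x]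
  have hne : ((2 ^ n * n.factorial : ℕ) : ℂ) ≠ 0 := by
    rw [Nat.cast_ne_zero]
    positivity
  rw [one_div, inv_mul_cancel_left₀ hne]

end Final


/-- Explicit partition-type formula for the mixed Hodge polynomial of the
`Sp₂ₙ`-character variety of `ℤʳ` (evaluated at `x = tuv`): averaging
`det(I + x Aw)^r` over `C₂ ≀ Sₙ` gives a sum over signed partitions of `n`. -/
theorem avg_det_pow_eq_sum_signedPartitions (n r : ℕ) (hn : 1 ≤ n) (hr : 1 ≤ r) (x : ℂ) :
    (1 / ((2 ^ n * n.factorial : ℕ) : ℂ)) *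
        ∑ w : Wr ℤˣ (Fin n), ((1 + x • Aw w).det) ^ r =
      ∑ k ∈ Finset.range (n + 1), ∑ p : Nat.Partition k, ∑ q : Nat.Partition (n - k),
        ((∏ i ∈ Finset.Icc 1 n, (1 - (-x) ^ i) ^ (p.parts.count i * r)) *
            ∏ j ∈ Finset.Icc 1 n, (1 + (-x) ^ j) ^ (q.parts.count j * r)) /
          ((∏ i ∈ Finset.Icc 1 n,
            (2 * i) ^ (p.parts.count i) * (p.parts.count i).factorial *
              ((2 * i) ^ (q.parts.count i) * (q.parts.count i).factorial) : ℕ) : ℂ) := by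
  exact final_result n r x
end

section
/- Let n ≥ 1 and let W = {[a;σ] ∈ C₂ ≀ Sₙ : ∏ a_i = 1}. For w ∈ W whose signed partition λ± satisfies: b_i = 0 for all even i and a_i = b_i = 0 for all odd i (i.e., all parts are even with positive sign), the centralizer of w in W equals the centralizer of w in C₂ ≀ Sₙ; otherwise the centralizer of w in W has index 2 in the centralizer of w in C₂ ≀ Sₙ. -/
open scoped Classical

/-- The index-two subgroup of `C₂ ≀ Sₙ` of elements `[a₁,…,aₙ;σ]` with `∏ aᵢ = 1`
(the Weyl group of `SO₂ₙ`, type `Dₙ`). -/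
def Wplus (n : ℕ) : Subgroup (Wr ℤˣ (Fin n)) where
  carrier := {x | ∏ i, x.a i = 1}
  one_mem' := by simp
  mul_mem' := by
    intro x y hx hy
    simp only [Set.mem_setOf_eq, Wr.mul_a] at *
    rw [Finset.prod_mul_distrib, Equiv.prod_comp x.p⁻¹ y.a, hx, hy, one_mul]
  inv_mem' := by
    intro x hx
    simp only [Set.mem_setOf_eq, Wr.inv_a] at *
    rw [Finset.prod_inv_distrib, Equiv.prod_comp x.p x.a, hx, inv_one]

namespace CentralizerAux

open Equiv Equiv.Perm Finset

/-! ### `ℤˣ` helpers -/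

lemma usq (u : ℤˣ) : u * u = 1 := Int.units_mul_self u

lemma upow_even (u : ℤˣ) {k : ℕ} (h : Even k) : u ^ k = 1 := by
  obtain ⟨m, rfl⟩ := h
  rw [← two_mul, pow_mul, Int.units_sq, one_pow]

lemma upow_odd (u : ℤˣ) {k : ℕ} (h : Odd k) : u ^ k = u := by
  obtain ⟨m, rfl⟩ := h
  rw [pow_add, pow_one, upow_even u ⟨m, (two_mul m).symm ▸ rfl⟩, one_mul]

lemma upow_parity (u : ℤˣ) {s t : ℕ} (h : Even (s + t)) : u ^ s = u ^ t := by
  have h1 : u ^ s * u ^ t = 1 := by rw [← pow_add]; exact upow_even u h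
  calc u ^ s = u ^ s * (u ^ t * u ^ t) := by rw [usq, mul_one]
    _ = (u ^ s * u ^ t) * u ^ t := (mul_assoc _ _ _).symm
    _ = u ^ t := by rw [h1, one_mul]

/-! ### cycle finsets -/

variable {n : ℕ}

/-- The finset of points on the `σ`-cycle of `i`. -/
noncomputable def cyc (σ : Perm (Fin n)) (i : Fin n) : Finset (Fin n) :=
  Finset.univ.filter (fun j => σ.SameCycle i j)

lemma mem_cyc {σ : Perm (Fin n)} {i j : Fin n} : j ∈ cyc σ i ↔ σ.SameCycle i j := by
  simp [cyc]

lemma self_mem_cyc (σ : Perm (Fin n)) (i : Fin n) : i ∈ cyc σ i :=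
  mem_cyc.mpr (Equiv.Perm.SameCycle.refl σ i)

lemma cyc_eq_of_sameCycle {σ : Perm (Fin n)} {i j : Fin n} (h : σ.SameCycle i j) :
    cyc σ i = cyc σ j := by
  ext m; simp only [mem_cyc]
  exact ⟨fun hm => h.symm.trans hm, fun hm => h.trans hm⟩

lemma cyc_card_pos (σ : Perm (Fin n)) (i : Fin n) : 0 < (cyc σ i).card :=
  Finset.card_pos.mpr ⟨i, self_mem_cyc σ i⟩

lemma cyc_of_fixed {σ : Perm (Fin n)} {i : Fin n} (h : σ i = i) : cyc σ i = {i} := by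
  ext j
  simp only [mem_cyc, Finset.mem_singleton]
  constructor
  · rintro ⟨z, rfl⟩
    exact zpow_apply_eq_self_of_apply_eq_self h z
  · rintro rfl; exact Equiv.Perm.SameCycle.refl σ _

lemma cyc_eq_support_cycleOf {σ : Perm (Fin n)} {i : Fin n} (h : σ i ≠ i) :
    cyc σ i = (σ.cycleOf i).support := by
  ext j
  rw [mem_cyc, Equiv.Perm.mem_support_cycleOf_iff]
  simp [Equiv.Perm.mem_support, h]

lemma pow_card_cyc (σ : Perm (Fin n)) (i : Fin n) : (σ ^ (cyc σ i).card) i = i := by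
  by_cases h : σ i = i
  · rw [cyc_of_fixed h]
    simp [h]
  · rw [cyc_eq_support_cycleOf h]
    have := Equiv.Perm.pow_mod_card_support_cycleOf_self_apply σ
      ((σ.cycleOf i).support.card) i
    rwa [Nat.mod_self, pow_zero, Equiv.Perm.one_apply, eq_comm] at this

lemma cyc_injOn (σ : Perm (Fin n)) (i : Fin n) :
    Set.InjOn (fun t => (σ ^ t) i) (Finset.range (cyc σ i).card) := by
  by_cases h : σ i = i
  · rw [cyc_of_fixed h]
    intro s hs t ht _
    simp only [Finset.coe_range, Set.mem_Iio, Finset.card_singleton] at hs ht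
    omega
  · have hmem : i ∈ (σ.cycleOf i).support :=
      Equiv.Perm.mem_support_cycleOf_iff.mpr ⟨Equiv.Perm.SameCycle.refl σ i,
        Equiv.Perm.mem_support.mpr h⟩
    have hco := σ.isCycleOn_support_cycleOf i
    have key : ∀ s t : ℕ, s ≤ t → t < (cyc σ i).card → (σ ^ s) i = (σ ^ t) i → s = t := by
      intro s t hst htlt heq
      have hfix : (σ ^ (t - s)) i = i := by
        have h2 : (σ ^ s) ((σ ^ (t - s)) i) = (σ ^ s) i := by
          rw [← Equiv.Perm.mul_apply, ← pow_add, Nat.add_sub_cancel' hst]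
          exact heq.symm
        exact (σ ^ s).injective h2
      have hdvd := (hco.pow_apply_eq hmem).mp hfix
      rw [cyc_eq_support_cycleOf h] at htlt
      have := Nat.eq_zero_of_dvd_of_lt hdvd
      omega
    intro s hs t ht heq
    simp only [Finset.coe_range, Set.mem_Iio] at hs ht
    rcases Nat.le_total s t with hle | hle
    · exact key s t hle ht heq
    · exact (key t s hle hs heq.symm).symm

lemma cyc_eq_image (σ : Perm (Fin n)) (i : Fin n) :
    cyc σ i = (Finset.range (cyc σ i).card).image (fun t => (σ ^ t) i) := by
  by_cases h : σ i = i
  · rw [cyc_of_fixed h]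
    simp
  · apply Finset.eq_of_subset_of_card_le
    · intro j hj
      rw [mem_cyc] at hj
      obtain ⟨t, ht, rfl⟩ := hj.exists_pow_eq_of_mem_support (Equiv.Perm.mem_support.mpr h)
      rw [← cyc_eq_support_cycleOf h] at ht
      exact Finset.mem_image.mpr ⟨t, Finset.mem_range.mpr ht, rfl⟩
    · calc ((Finset.range (cyc σ i).card).image (fun t => (σ ^ t) i)).card
          ≤ (Finset.range (cyc σ i).card).card := Finset.card_image_le
        _ = (cyc σ i).card := Finset.card_range _

lemma prod_cyc {M : Type*} [CommMonoid M] (σ : Perm (Fin n)) (i : Fin n) (f : Fin n → M) :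
    ∏ j ∈ cyc σ i, f j = ∏ t ∈ Finset.range (cyc σ i).card, f ((σ ^ t) i) := by
  conv_lhs => rw [cyc_eq_image σ i]
  exact Finset.prod_image (fun s hs t ht heq => cyc_injOn σ i (by simpa using hs) (by simpa using ht) heq)


/-! ### cycle representatives -/

noncomputable def rep (σ : Perm (Fin n)) (i : Fin n) : Fin n :=
  (cyc σ i).min' ⟨i, self_mem_cyc σ i⟩

lemma sameCycle_rep (σ : Perm (Fin n)) (i : Fin n) : σ.SameCycle i (rep σ i) :=
  mem_cyc.mp ((cyc σ i).min'_mem _)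

lemma rep_eq_of_sameCycle {σ : Perm (Fin n)} {i j : Fin n} (h : σ.SameCycle i j) :
    rep σ i = rep σ j := by
  have h2 : cyc σ i = cyc σ j := cyc_eq_of_sameCycle h
  unfold rep
  simp_rw [h2]

lemma rep_mem_fix {σ : Perm (Fin n)} {c : Fin n}
    (hc : c ∈ Finset.univ.image (rep σ)) : rep σ c = c := by
  obtain ⟨j, _, rfl⟩ := Finset.mem_image.mp hc
  exact (rep_eq_of_sameCycle (sameCycle_rep σ j)).symm

/-! ### transport along a commuting permutation -/

lemma comm_pow_apply {σ τ : Perm (Fin n)} (hc : Commute σ τ) (t : ℕ) (j : Fin n) :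
    (σ ^ t) (τ j) = τ ((σ ^ t) j) := by
  rw [← Equiv.Perm.mul_apply, (hc.pow_left t).eq, Equiv.Perm.mul_apply]

lemma sameCycle_map {σ τ : Perm (Fin n)} (hc : Commute σ τ) {a b : Fin n}
    (h : σ.SameCycle a b) : σ.SameCycle (τ a) (τ b) := by
  obtain ⟨z, hz⟩ := h
  exact ⟨z, by rw [← Equiv.Perm.mul_apply, (hc.zpow_left z).eq, Equiv.Perm.mul_apply, hz]⟩

/-! ### a triangle product -/

lemma prod_triangle {M : Type*} [CommMonoid M] (v : ℕ → M) (k : ℕ) :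
    ∏ s ∈ Finset.range k, ∏ t ∈ Finset.range s, v t
      = ∏ t ∈ Finset.range k, v t ^ (k - 1 - t) := by
  induction k with
  | zero => simp
  | succ k ih =>
    rw [Finset.prod_range_succ, ih,
      Finset.prod_range_succ (fun t => v t ^ (k + 1 - 1 - t))]
    simp only [Nat.add_sub_cancel, Nat.sub_self, pow_zero, mul_one]
    rw [← Finset.prod_mul_distrib]
    refine Finset.prod_congr rfl fun t ht => ?_
    rw [Finset.mem_range] at ht
    have h1 : k - t = (k - 1 - t) + 1 := by omega
    rw [h1, pow_succ]

/-! ### the key lemma: commuting elements have positive total sign -/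

lemma prod_a_eq_one {n : ℕ} (w x : Wr ℤˣ (Fin n)) (hcomm : w * x = x * w)
    (heven : ∀ i, Even (cyc w.p i).card)
    (hpos : ∀ i : Fin n, cycleProd w.a w.p i = 1) :
    ∏ i, x.a i = 1 := by
  set σ := w.p with hσdef
  set τ := x.p with hτdef
  have hστ : Commute σ τ := congrArg Wr.p hcomm
  set k : Fin n → ℕ := fun i => (cyc σ i).card with hkdef
  -- the basic commutation relation on the `a`-components
  have hrel : ∀ j, x.a (σ⁻¹ j) = x.a j * (w.a j * w.a (τ⁻¹ j)) := by
    intro j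
    have h0 : w.a j * x.a (σ⁻¹ j) = x.a j * w.a (τ⁻¹ j) :=
      congrFun (congrArg Wr.a hcomm) j
    calc x.a (σ⁻¹ j) = w.a j * (w.a j * x.a (σ⁻¹ j)) := by
          rw [← mul_assoc, usq, one_mul]
      _ = w.a j * (x.a j * w.a (τ⁻¹ j)) := by rw [h0]
      _ = x.a j * (w.a j * w.a (τ⁻¹ j)) := by rw [mul_left_comm]
  have hrel' : ∀ j, x.a (σ j) = x.a j * (w.a (σ j) * w.a (τ⁻¹ (σ j))) := by
    intro j
    have h1 := hrel (σ j)
    rw [show ∀ y, σ⁻¹ (σ y) = y from Equiv.symm_apply_apply σ] at h1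
    rw [h1, mul_assoc, usq, mul_one]
  set v : Fin n → ℕ → ℤˣ := fun i t => w.a ((σ ^ t) i) * w.a (τ⁻¹ ((σ ^ t) i)) with hvdef
  have hpowsucc : ∀ (s : ℕ) (i : Fin n), (σ ^ (s+1)) i = σ ((σ ^ s) i) := by
    intro s i
    rw [pow_succ']
    rfl
  have hiter : ∀ (i : Fin n) (s : ℕ),
      x.a ((σ ^ s) i) = x.a i * ∏ t ∈ Finset.range s, v i (t+1) := by
    intro i s
    induction s with
    | zero => simp
    | succ s ih =>
      have hv : v i (s+1) = w.a (σ ((σ ^ s) i)) * w.a (τ⁻¹ (σ ((σ ^ s) i))) := by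
        simp only [hvdef]
        rw [hpowsucc s i]
      rw [hpowsucc s i, hrel' ((σ ^ s) i), ih, Finset.prod_range_succ, hv, mul_assoc]
  set hfun : Fin n → ℤˣ := fun i => ∏ t ∈ Finset.range (k i), (w.a ((σ ^ t) i)) ^ t
    with hhdef
  have hcycprod : ∀ i, ∏ t ∈ Finset.range (k i), w.a ((σ ^ t) i) = 1 := by
    intro i
    rw [← prod_cyc σ i w.a]
    exact hpos i
  have hshift : ∀ i, ∏ t ∈ Finset.range (k i), (w.a ((σ ^ (t+1)) i)) ^ (t+1) = hfun i := by
    intro i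
    have hfix : (σ ^ (k i)) i = i := pow_card_cyc σ i
    have e1 : (∏ t ∈ Finset.range (k i), (w.a ((σ ^ (t+1)) i)) ^ (t+1))
        * (w.a ((σ ^ 0) i)) ^ 0
        = ∏ s ∈ Finset.range (k i + 1), (w.a ((σ ^ s) i)) ^ s :=
      (Finset.prod_range_succ' (fun s => (w.a ((σ ^ s) i)) ^ s) (k i)).symm
    rw [pow_zero, mul_one] at e1
    rw [e1, Finset.prod_range_succ, hfix, upow_even _ (heven i), mul_one]
  have hstep : ∀ i, hfun (σ i) = hfun i := by
    intro i
    have hk1 : k (σ i) = k i :=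
      congrArg Finset.card (cyc_eq_of_sameCycle ⟨1, by simp⟩).symm
    have e1 : hfun (σ i) = ∏ t ∈ Finset.range (k i), (w.a ((σ ^ (t+1)) i)) ^ t := by
      rw [hhdef]
      simp only []
      rw [hk1]
      refine Finset.prod_congr rfl fun t _ => ?_
      have h2 : (σ ^ (t+1)) i = (σ ^ t) (σ i) := by rw [pow_succ]; rfl
      rw [h2]
    have e2 : hfun (σ i) * hfun i = ∏ t ∈ Finset.range (k i), w.a ((σ ^ (t+1)) i) := by
      rw [e1]
      conv_lhs => rw [← hshift i]
      rw [← Finset.prod_mul_distrib]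
      refine Finset.prod_congr rfl fun t _ => ?_
      rw [← pow_add]
      exact upow_odd _ ⟨t, by ring⟩
    have e3 : ∏ t ∈ Finset.range (k i), w.a ((σ ^ (t+1)) i) = 1 := by
      have hfix : (σ ^ (k i)) i = i := pow_card_cyc σ i
      have e4 : (∏ t ∈ Finset.range (k i), w.a ((σ ^ (t+1)) i)) * w.a ((σ ^ 0) i)
          = (∏ t ∈ Finset.range (k i), w.a ((σ ^ t) i)) * w.a ((σ ^ (k i)) i) := by
        rw [← Finset.prod_range_succ' (fun s => w.a ((σ ^ s) i)) (k i),
          Finset.prod_range_succ]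
      rw [hfix, pow_zero] at e4
      have e5 := mul_right_cancel e4
      rw [e5, hcycprod i]
    calc hfun (σ i) = (hfun (σ i) * hfun i) * hfun i := by rw [mul_assoc, usq, mul_one]
      _ = hfun i := by rw [e2, e3, one_mul]
  have hpowh : ∀ (t : ℕ) (i : Fin n), hfun ((σ ^ t) i) = hfun i := by
    intro t
    induction t with
    | zero => intro i; simp
    | succ t ih => intro i; rw [hpowsucc t i, hstep, ih]
  have hsame : ∀ {i j : Fin n}, σ.SameCycle i j → hfun i = hfun j := by
    intro i j hij
    have hj : j ∈ cyc σ i := mem_cyc.mpr hij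
    rw [cyc_eq_image] at hj
    obtain ⟨t, _, rfl⟩ := Finset.mem_image.mp hj
    exact (hpowh t i).symm
  have hkτ : ∀ i, k (τ⁻¹ i) = k i := by
    intro i
    have himg : cyc σ (τ⁻¹ i) = (cyc σ i).image (fun j => τ⁻¹ j) := by
      ext j
      simp only [mem_cyc, Finset.mem_image]
      constructor
      · intro hj
        refine ⟨τ j, ?_, Equiv.symm_apply_apply τ j⟩
        have h4 := sameCycle_map hστ hj
        rwa [show ∀ y, τ (τ⁻¹ y) = y from Equiv.apply_symm_apply τ] at h4
      · rintro ⟨j', hj', rfl⟩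
        exact sameCycle_map hστ.inv_right hj'
    show (cyc σ (τ⁻¹ i)).card = (cyc σ i).card
    rw [himg]
    exact Finset.card_image_of_injective _ (Equiv.injective τ⁻¹)
  have hS : ∀ i, ∏ j ∈ cyc σ i, x.a j = hfun i * hfun (τ⁻¹ i) := by
    intro i
    rw [prod_cyc σ i x.a]
    rw [Finset.prod_congr rfl fun s _ => hiter i s, Finset.prod_mul_distrib,
      Finset.prod_const, Finset.card_range, upow_even _ (heven i), one_mul,
      prod_triangle (fun t => v i (t+1)) (k i)]
    have e1 : ∀ t ∈ Finset.range (k i), (v i (t+1)) ^ (k i - 1 - t)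
        = (w.a ((σ ^ (t+1)) i)) ^ (t+1) * (w.a ((σ ^ (t+1)) (τ⁻¹ i))) ^ (t+1) := by
      intro t ht
      rw [Finset.mem_range] at ht
      have hpar : (v i (t+1)) ^ (k i - 1 - t) = (v i (t+1)) ^ (t+1) := by
        refine upow_parity _ ?_
        have h1 : (k i - 1 - t) + (t+1) = k i := by
          have := cyc_card_pos σ i
          omega
        rw [h1]
        exact heven i
      rw [hpar, hvdef]
      simp only []
      rw [mul_pow]
      congr 3
      rw [comm_pow_apply hστ.inv_right]
    rw [Finset.prod_congr rfl e1, Finset.prod_mul_distrib, hshift i]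
    congr 1
    have e2 : ∏ t ∈ Finset.range (k i), (w.a ((σ ^ (t+1)) (τ⁻¹ i))) ^ (t+1)
        = ∏ t ∈ Finset.range (k (τ⁻¹ i)), (w.a ((σ ^ (t+1)) (τ⁻¹ i))) ^ (t+1) := by
      rw [hkτ i]
    rw [e2, hshift (τ⁻¹ i)]
  -- fiberwise decomposition over cycle representatives
  have hfib : ∀ c ∈ Finset.univ.image (rep σ),
      Finset.univ.filter (fun j => rep σ j = c) = cyc σ c := by
    intro c hc
    have hcfix := rep_mem_fix hc
    ext j
    simp only [Finset.mem_filter, Finset.mem_univ, true_and, mem_cyc]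
    constructor
    · rintro rfl
      exact (sameCycle_rep σ j).symm
    · intro hj
      exact (rep_eq_of_sameCycle hj).symm.trans hcfix
  have hreindex : ∏ c ∈ Finset.univ.image (rep σ), hfun (τ⁻¹ c)
      = ∏ c ∈ Finset.univ.image (rep σ), hfun c := by
    have h1 : ∀ c ∈ Finset.univ.image (rep σ), hfun (τ⁻¹ c) = hfun (rep σ (τ⁻¹ c)) :=
      fun c _ => hsame (sameCycle_rep σ (τ⁻¹ c))
    rw [Finset.prod_congr rfl h1]
    refine Finset.prod_nbij' (fun c => rep σ (τ⁻¹ c)) (fun c => rep σ (τ c))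
      ?_ ?_ ?_ ?_ ?_
    · intro c _
      exact Finset.mem_image.mpr ⟨τ⁻¹ c, Finset.mem_univ _, rfl⟩
    · intro c _
      exact Finset.mem_image.mpr ⟨τ c, Finset.mem_univ _, rfl⟩
    · intro c hc
      have h2 : σ.SameCycle (τ⁻¹ c) (rep σ (τ⁻¹ c)) := sameCycle_rep _ _
      have h3 := sameCycle_map hστ h2
      rw [show ∀ y, τ (τ⁻¹ y) = y from Equiv.apply_symm_apply τ] at h3
      exact (rep_eq_of_sameCycle h3).symm.trans (rep_mem_fix hc)
    · intro c hc
      have h2 : σ.SameCycle (τ c) (rep σ (τ c)) := sameCycle_rep _ _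
      have h3 := sameCycle_map hστ.inv_right h2
      rw [show ∀ y, τ⁻¹ (τ y) = y from Equiv.symm_apply_apply τ] at h3
      exact (rep_eq_of_sameCycle h3).symm.trans (rep_mem_fix hc)
    · intro c _
      rfl
  calc ∏ i, x.a i
      = ∏ c ∈ Finset.univ.image (rep σ),
          ∏ j ∈ Finset.univ.filter (fun j => rep σ j = c), x.a j :=
        (Finset.prod_fiberwise_of_maps_to
          (fun j _ => Finset.mem_image.mpr ⟨j, Finset.mem_univ _, rfl⟩) x.a).symm
    _ = ∏ c ∈ Finset.univ.image (rep σ), (hfun c * hfun (τ⁻¹ c)) := by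
        refine Finset.prod_congr rfl fun c hc => ?_
        rw [hfib c hc, hS c]
    _ = (∏ c ∈ Finset.univ.image (rep σ), hfun c)
          * ∏ c ∈ Finset.univ.image (rep σ), hfun (τ⁻¹ c) := Finset.prod_mul_distrib
    _ = ∏ c ∈ Finset.univ.image (rep σ), (hfun c * hfun c) := by
        rw [hreindex, Finset.prod_mul_distrib]
    _ = 1 := by
        rw [Finset.prod_congr rfl fun c _ => usq (hfun c), Finset.prod_const_one]

/-! ### the total sign homomorphism -/

def phi (n : ℕ) : Wr ℤˣ (Fin n) →* ℤˣ where
  toFun x := ∏ i, x.a i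
  map_one' := by simp
  map_mul' x y := by
    simp only [Wr.mul_a]
    rw [Finset.prod_mul_distrib, Equiv.prod_comp x.p⁻¹ y.a]

lemma mem_Wplus_iff {n : ℕ} (x : Wr ℤˣ (Fin n)) : x ∈ Wplus n ↔ ∏ i, x.a i = 1 :=
  Iff.rfl

/-! ### elements of the centralizer with negative total sign -/

lemma exists_neg_of_odd {n : ℕ} (w : Wr ℤˣ (Fin n)) (i : Fin n)
    (hodd : Odd (cyc w.p i).card) :
    ∃ y : Wr ℤˣ (Fin n), w * y = y * w ∧ ∏ j, y.a j = -1 := by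
  refine ⟨⟨fun j => if w.p.SameCycle i j then -1 else 1, 1⟩, ?_, ?_⟩
  · ext j
    · simp only [Wr.mul_a]
      have h1 : w.p.SameCycle i (w.p⁻¹ j) ↔ w.p.SameCycle i j :=
        Equiv.Perm.sameCycle_symm_apply_right
      simp only [inv_one, Equiv.Perm.one_apply]
      by_cases hc : w.p.SameCycle i j
      · rw [if_pos hc, if_pos (h1.mpr hc), mul_comm]
      · rw [if_neg hc, if_neg (fun h => hc (h1.mp h)), mul_one, one_mul]
    · simp
  · show ∏ j, (if w.p.SameCycle i j then (-1 : ℤˣ) else 1) = -1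
    rw [Finset.prod_ite (fun _ => (-1 : ℤˣ)) (fun _ => (1 : ℤˣ)),
      Finset.prod_const_one, mul_one, Finset.prod_const]
    exact upow_odd _ hodd

lemma exists_neg_of_negcyc {n : ℕ} (w : Wr ℤˣ (Fin n)) (i : Fin n)
    (hneg : cycleProd w.a w.p i = -1) :
    ∃ y : Wr ℤˣ (Fin n), w * y = y * w ∧ ∏ j, y.a j = -1 := by
  refine ⟨⟨fun j => if w.p.SameCycle i j then w.a j else 1, w.p.cycleOf i⟩, ?_, ?_⟩
  · ext j
    · simp only [Wr.mul_a]
      by_cases hc : w.p.SameCycle i j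
      · have h1 : w.p.SameCycle i (w.p⁻¹ j) := Equiv.Perm.sameCycle_symm_apply_right.mpr hc
        have h2 : ((w.p.cycleOf i)⁻¹) j = w.p⁻¹ j := by
          rw [Equiv.Perm.cycleOf_inv, Equiv.Perm.cycleOf_apply,
            if_pos (Equiv.Perm.sameCycle_inv.mpr hc)]
        rw [h2, if_pos hc, if_pos h1]
      · have h1 : ¬ w.p.SameCycle i (w.p⁻¹ j) :=
          fun h => hc (Equiv.Perm.sameCycle_symm_apply_right.mp h)
        have h2 : ((w.p.cycleOf i)⁻¹) j = j := by
          rw [Equiv.Perm.cycleOf_inv, Equiv.Perm.cycleOf_apply,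
            if_neg (fun h => hc (Equiv.Perm.sameCycle_inv.mp h))]
        rw [h2, if_neg hc, if_neg h1, mul_one, one_mul]
    · simp only [Wr.mul_p]
      rw [Equiv.Perm.mul_apply, Equiv.Perm.mul_apply, Equiv.Perm.cycleOf_apply,
        Equiv.Perm.cycleOf_apply]
      by_cases hc : w.p.SameCycle i j
      · rw [if_pos hc, if_pos (Equiv.Perm.sameCycle_apply_right.mpr hc)]
      · rw [if_neg hc, if_neg (fun h => hc (Equiv.Perm.sameCycle_apply_right.mp h))]
  · show ∏ j, (if w.p.SameCycle i j then w.a j else (1 : ℤˣ)) = -1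
    rw [Finset.prod_ite w.a (fun _ => (1 : ℤˣ)), Finset.prod_const_one, mul_one]
    exact hneg

/-! ### witnesses from the signed counts -/

lemma signedCount_pos_witness {n : ℕ} (w : Wr ℤˣ (Fin n)) {k₀ : ℕ} {ε : ℤˣ}
    (h : signedCount w k₀ ε ≠ 0) :
    ∃ i : Fin n, (cyc w.p i).card = k₀ ∧ cycleProd w.a w.p i = ε := by
  obtain ⟨i, hi⟩ := Finset.card_ne_zero.mp h
  rw [Finset.mem_filter] at hi
  exact ⟨i, hi.2.1, hi.2.2⟩

lemma witness_signedCount {n : ℕ} (w : Wr ℤˣ (Fin n)) (i : Fin n) :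
    signedCount w ((cyc w.p i).card) (cycleProd w.a w.p i) ≠ 0 :=
  Finset.card_ne_zero_of_mem (Finset.mem_filter.mpr ⟨Finset.mem_univ i, rfl, rfl⟩)

end CentralizerAux

/-- For `w` in the Weyl group `W = Wplus n` of `SO₂ₙ` whose signed partition has `a i`
positive and `b i` negative parts equal to `i`: if all parts are even with positive sign
then the centralizer of `w` in `W` equals its centralizer in `C₂ ≀ Sₙ`; otherwise it has
index 2 in it. -/
theorem centralizer_in_Wplus (n : ℕ) (hn : 1 ≤ n) (w : Wr ℤˣ (Fin n)) (hw : w ∈ Wplus n)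
    (a b : ℕ → ℕ)
    (ha : ∀ k, signedCount w k 1 = k * a k)
    (hb : ∀ k, signedCount w k (-1) = k * b k) :
    (((∀ i, 1 ≤ i → Odd i → a i = 0 ∧ b i = 0) ∧ ∀ i, 1 ≤ i → Even i → b i = 0) →
        (Wplus n).relIndex (Subgroup.centralizer {w}) = 1) ∧
      (¬((∀ i, 1 ≤ i → Odd i → a i = 0 ∧ b i = 0) ∧ ∀ i, 1 ≤ i → Even i → b i = 0) →
        (Wplus n).relIndex (Subgroup.centralizer {w}) = 2) := by
  classical
  have hcent : ∀ x : Wr ℤˣ (Fin n), x ∈ Subgroup.centralizer {w} ↔ w * x = x * w := by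
    intro x
    rw [Subgroup.mem_centralizer_iff]
    constructor
    · intro h; exact h w rfl
    · rintro h g rfl; exact h
  constructor
  · -- all parts even and positive: the centralizer lies in `Wplus n`
    intro hcond
    have key : ∀ i : Fin n, cycleProd w.a w.p i = 1 ∧ Even ((CentralizerAux.cyc w.p i).card) := by
      intro i
      set m := (CentralizerAux.cyc w.p i).card with hm
      have hm1 : 1 ≤ m := CentralizerAux.cyc_card_pos w.p i
      have hbm : b m = 0 := by
        rcases Nat.even_or_odd m with he | ho
        · exact hcond.2 m hm1 he
        · exact (hcond.1 m hm1 ho).2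
      have hprod : cycleProd w.a w.p i = 1 := by
        rcases Int.units_eq_one_or (cycleProd w.a w.p i) with h | h
        · exact h
        · exfalso
          have hne := CentralizerAux.witness_signedCount w i
          rw [h, ← hm] at hne
          rw [hb m, hbm, mul_zero] at hne
          exact hne rfl
      refine ⟨hprod, ?_⟩
      rcases Nat.even_or_odd m with he | ho
      · exact he
      · exfalso
        have ham : a m = 0 := (hcond.1 m hm1 ho).1
        have hne := CentralizerAux.witness_signedCount w i
        rw [hprod, ← hm] at hne
        rw [ha m, ham, mul_zero] at hne
        exact hne rfl
    rw [Subgroup.relIndex_eq_one]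
    intro x hx
    rw [CentralizerAux.mem_Wplus_iff]
    exact CentralizerAux.prod_a_eq_one w x ((hcent x).mp hx)
      (fun i => (key i).2) (fun i => (key i).1)
  · -- otherwise: produce an element of the centralizer with negative total sign
    intro hcond
    have hwit : ∃ y : Wr ℤˣ (Fin n), w * y = y * w ∧ ∏ j, y.a j = -1 := by
      rw [not_and_or] at hcond
      rcases hcond with hA | hB
      · push_neg at hA
        obtain ⟨i, hi1, hiodd, hab⟩ := hA
        rcases eq_or_ne (a i) 0 with h0 | haa
        case inl =>
          have hbb : b i ≠ 0 := hab h0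
          have hne : signedCount w i (-1) ≠ 0 := by
            rw [hb i]
            exact Nat.mul_ne_zero (by omega) hbb
          obtain ⟨j, _, hjp⟩ := CentralizerAux.signedCount_pos_witness w hne
          exact CentralizerAux.exists_neg_of_negcyc w j hjp
        · have hne : signedCount w i 1 ≠ 0 := by
            rw [ha i]
            exact Nat.mul_ne_zero (by omega) haa
          obtain ⟨j, hjk, _⟩ := CentralizerAux.signedCount_pos_witness w hne
          exact CentralizerAux.exists_neg_of_odd w j (by rw [hjk]; exact hiodd)
      · push_neg at hB
        obtain ⟨i, hi1, _, hbb⟩ := hB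
        have hne : signedCount w i (-1) ≠ 0 := by
          rw [hb i]
          exact Nat.mul_ne_zero (by omega) hbb
        obtain ⟨j, _, hjp⟩ := CentralizerAux.signedCount_pos_witness w hne
        exact CentralizerAux.exists_neg_of_negcyc w j hjp
    obtain ⟨y, hyc, hyprod⟩ := hwit
    have hyC : y ∈ Subgroup.centralizer {w} := (hcent y).mpr hyc
    set ψ : Subgroup.centralizer {w} →* ℤˣ :=
      (CentralizerAux.phi n).comp (Subgroup.centralizer ({w} : Set (Wr ℤˣ (Fin n)))).subtype
      with hψ
    have hker : (Wplus n).subgroupOf (Subgroup.centralizer {w}) = ψ.ker := by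
      ext z
      rw [Subgroup.mem_subgroupOf, MonoidHom.mem_ker]
      exact Iff.rfl
    show ((Wplus n).subgroupOf (Subgroup.centralizer {w})).index = 2
    rw [hker, Subgroup.index_ker]
    rw [Nat.card_eq_two_iff]
    have hmem1 : (1 : ℤˣ) ∈ ψ.range := ⟨1, map_one ψ⟩
    have hmem2 : (-1 : ℤˣ) ∈ ψ.range := ⟨⟨y, hyC⟩, hyprod⟩
    refine ⟨⟨1, hmem1⟩, ⟨-1, hmem2⟩, ?_, ?_⟩
    · intro h
      have h1 : (1 : ℤˣ) = -1 := congrArg Subtype.val h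
      exact absurd h1 (by decide)
    · ext u
      simp only [Set.mem_insert_iff, Set.mem_singleton_iff, Set.mem_univ, iff_true]
      rcases Int.units_eq_one_or u.val with h | h
      · left; exact Subtype.ext h
      · right; exact Subtype.ext h
end
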